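/- arXiv:1012.2494 — 8 statements merged into one kernel-verified Lean document; each statement's English description precedes it below -/
import Mathlib

section
/- Let d ≥ 1 and let f₀ : ℝ^d × ℝ^d → ℝ be a C² function with compact support. Define ρ(x) = ∫_{ℝ^d} f₀(x,v) dv and m(x) = ∫_{ℝ^d} v f₀(x,v) dv. Then there exists a constant C ≥ 0 such that for all x ∈ ℝ^d and all h ∈ ℝ with |h| ≤ 1, |∫_{ℝ^d} f₀(x − h v, v) dv − ρ(x) + h (div_x m)(x)| ≤ C h². (This is the key estimate showing the density computed after the free-streaming half step of Strang splitting, ∫ f(tⁿ, x − (Δt/2)v, v) dv, agrees with ρ(tⁿ + Δt/2, x) to second order in Δt for exact solutions of the Vlasov equation, whose density satisfies ∂_t ρ = −div_x m.) -/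
open MeasureTheory

section Aux

variable {d : ℕ}

private lemma integrable_of_support_subset' {G : Type*} [NormedAddCommGroup G]
    {K : Set (Fin d → ℝ)} (hK : IsCompact K)
    {g : (Fin d → ℝ) → G} (hg : Continuous g) (h0 : ∀ v ∉ K, g v = 0) :
    Integrable g (volume : Measure (Fin d → ℝ)) :=
  hg.integrable_of_hasCompactSupport (HasCompactSupport.intro hK h0)

private lemma fderiv_bound_aux {E F : Type*} [NormedAddCommGroup E] [NormedSpace ℝ E]
    [NormedAddCommGroup F] [NormedSpace ℝ F] {g : E → F}
    (h1 : HasCompactSupport (fderiv ℝ g)) (h2 : Continuous (fderiv ℝ g)) :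
    ∃ C, ∀ p, ‖fderiv ℝ g p‖ ≤ C :=
  h1.exists_bound_of_continuous h2

end Aux

set_option maxHeartbeats 1600000 in
/-- The density computed after the free-streaming half step of Strang splitting agrees
with `ρ - h · div m` to second order in `h`. -/
theorem strang_density_second_order (d : ℕ) (hd : 1 ≤ d)
    (f₀ : (Fin d → ℝ) × (Fin d → ℝ) → ℝ)
    (hf : ContDiff ℝ 2 f₀) (hsupp : HasCompactSupport f₀) :
    ∃ C : ℝ, 0 ≤ C ∧ ∀ (x : Fin d → ℝ) (h : ℝ), |h| ≤ 1 →
      |(∫ v : Fin d → ℝ, f₀ (x - h • v, v)) - (∫ v : Fin d → ℝ, f₀ (x, v)) +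
          h * (∑ i : Fin d,
            fderiv ℝ (fun y : Fin d → ℝ => ∫ v : Fin d → ℝ, f₀ (y, v) • v) x
              (Pi.single i 1) i)| ≤ C * h ^ 2 := by
  classical
  have hfc : Continuous f₀ := hf.continuous
  have hfd : Differentiable ℝ f₀ := hf.differentiable (by norm_num)
  set f' := fderiv ℝ f₀ with hf'def
  have hf'cd : ContDiff ℝ 1 f' := hf.fderiv_right (m := 1) (by norm_num)
  have hf'c : Continuous f' := hf'cd.continuous
  have hf'd : Differentiable ℝ f' := hf'cd.differentiable (by norm_num)
  have hf'supp : HasCompactSupport f' := hsupp.fderiv (𝕜 := ℝ)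
  have hf''c : Continuous (fderiv ℝ f') := hf'cd.continuous_fderiv (by norm_num)
  have hf''supp : HasCompactSupport (fderiv ℝ f') := hf'supp.fderiv (𝕜 := ℝ)
  obtain ⟨M₁, hM₁⟩ := hf'supp.exists_bound_of_continuous hf'c
  obtain ⟨M₂, hM₂⟩ := fderiv_bound_aux hf''supp hf''c
  have hM₁0 : 0 ≤ M₁ := le_trans (norm_nonneg _) (hM₁ (0, 0))
  have hM₂0 : 0 ≤ M₂ := le_trans (norm_nonneg _) (hM₂ (0, 0))
  set K : Set (Fin d → ℝ) := Prod.snd '' tsupport f₀ with hKdef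
  have hKc : IsCompact K := hsupp.image continuous_snd
  have hKmeas : MeasurableSet K := hKc.isClosed.measurableSet
  obtain ⟨R₀, hR₀⟩ := hKc.isBounded.exists_norm_le
  set R : ℝ := max R₀ 0 with hRdef
  have hR0 : 0 ≤ R := le_max_right _ _
  have hR : ∀ v ∈ K, ‖v‖ ≤ R := fun v hv => (hR₀ v hv).trans (le_max_left _ _)
  -- vanishing outside K
  have hvan : ∀ (y v : Fin d → ℝ), v ∉ K → f₀ (y, v) = 0 := by
    intro y v hv
    by_contra h0
    exact hv ⟨(y, v), subset_tsupport _ h0, rfl⟩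
  have hvan' : ∀ (y v : Fin d → ℝ), v ∉ K → f' (y, v) = 0 := by
    intro y v hv
    by_contra h0
    exact hv ⟨(y, v), support_fderiv_subset ℝ h0, rfl⟩
  -- the parametric derivative
  set Φ : (Fin d → ℝ) → (Fin d → ℝ) → ((Fin d → ℝ) →L[ℝ] (Fin d → ℝ)) :=
    fun y v => ((f' (y, v)).comp
      (ContinuousLinearMap.inl ℝ (Fin d → ℝ) (Fin d → ℝ))).smulRight v with hΦdef
  have hΦderiv : ∀ (y v : Fin d → ℝ),
      HasFDerivAt (fun y : Fin d → ℝ => f₀ (y, v) • v) (Φ y v) y := by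
    intro y v
    exact ((hfd (y, v)).hasFDerivAt.comp y (hasFDerivAt_prodMk_left y v)).smul_const v
  have hΦcont : ∀ y, Continuous fun v => Φ y v := by
    intro y
    have h1 : Continuous fun v : Fin d → ℝ => f' (y, v) :=
      hf'c.comp (continuous_const.prodMk continuous_id)
    have h2 : Continuous fun v : Fin d → ℝ =>
        (f' (y, v)).comp (ContinuousLinearMap.inl ℝ (Fin d → ℝ) (Fin d → ℝ)) :=
      (((ContinuousLinearMap.compL ℝ (Fin d → ℝ)
        ((Fin d → ℝ) × (Fin d → ℝ)) ℝ).flip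
        (ContinuousLinearMap.inl ℝ (Fin d → ℝ) (Fin d → ℝ))).continuous).comp h1
    exact (ContinuousLinearMap.smulRightL ℝ (Fin d → ℝ) (Fin d → ℝ)).continuous₂.comp
      (h2.prodMk continuous_id)
  have hcompnorm : ∀ p : (Fin d → ℝ) × (Fin d → ℝ),
      ‖(f' p).comp (ContinuousLinearMap.inl ℝ (Fin d → ℝ) (Fin d → ℝ))‖ ≤ ‖f' p‖ := by
    intro p
    refine ContinuousLinearMap.opNorm_le_bound _ (norm_nonneg _) fun u => ?_
    have : ‖((u, (0 : Fin d → ℝ)) : (Fin d → ℝ) × (Fin d → ℝ))‖ = ‖u‖ := by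
      simp [Prod.norm_def]
    calc ‖f' p (u, 0)‖ ≤ ‖f' p‖ * ‖((u, (0 : Fin d → ℝ)) : _ × _)‖ :=
          ContinuousLinearMap.le_opNorm _ _
      _ = ‖f' p‖ * ‖u‖ := by rw [this]
  have hΦnorm : ∀ y v, ‖Φ y v‖ ≤ M₁ * ‖v‖ := by
    intro y v
    rw [hΦdef, ContinuousLinearMap.norm_smulRight_apply]
    exact mul_le_mul_of_nonneg_right ((hcompnorm (y, v)).trans (hM₁ _)) (norm_nonneg _)
  have hΦzero : ∀ y v, v ∉ K → Φ y v = 0 := by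
    intro y v hv
    rw [hΦdef]
    simp only [hvan' y v hv]
    ext u
    simp
  have hboundint : Integrable (K.indicator fun _ => M₁ * R) (volume : Measure (Fin d → ℝ)) := by
    rw [integrable_indicator_iff hKmeas]
    exact integrableOn_const hKc.measure_lt_top.ne
  -- differentiation under the integral sign
  have hm : ∀ x : Fin d → ℝ,
      HasFDerivAt (fun y : Fin d → ℝ => ∫ v : Fin d → ℝ, f₀ (y, v) • v)
        (∫ v : Fin d → ℝ, Φ x v) x := by
    intro x
    apply hasFDerivAt_integral_of_dominated_of_fderiv_le
      (bound := K.indicator fun _ => M₁ * R) (s := Metric.ball x 1) (Metric.ball_mem_nhds x one_pos)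
    · filter_upwards with y
      exact ((hfc.comp (continuous_const.prodMk continuous_id)).smul
        continuous_id).aestronglyMeasurable
    · refine integrable_of_support_subset' hKc
        ((hfc.comp (continuous_const.prodMk continuous_id)).smul continuous_id) ?_
      intro v hv
      simp [hvan x v hv]
    · exact (hΦcont x).aestronglyMeasurable
    · filter_upwards with v
      intro y _
      by_cases hv : v ∈ K
      · rw [Set.indicator_of_mem hv]
        exact (hΦnorm y v).trans
          (mul_le_mul_of_nonneg_left (hR v hv) hM₁0)
      · rw [Set.indicator_of_notMem hv, hΦzero y v hv]
        simp
    · exact hboundint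
    · filter_upwards with v
      intro y _
      exact hΦderiv y v
  -- identification of the divergence term
  have hΦint : ∀ x, Integrable (fun v => Φ x v) (volume : Measure (Fin d → ℝ)) := by
    intro x
    exact integrable_of_support_subset' hKc (hΦcont x) (hΦzero x)
  have happlyint : ∀ (x : Fin d → ℝ) (i : Fin d),
      Integrable (fun v : Fin d → ℝ => (Φ x v (Pi.single i 1)) i)
        (volume : Measure (Fin d → ℝ)) := by
    intro x i
    refine integrable_of_support_subset' hKc ?_ ?_
    · exact (continuous_apply i).comp
        (((hΦcont x).clm_apply continuous_const))
    · intro v hv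
      rw [hΦzero x v hv]
      simp
  have hDcont : ∀ x : Fin d → ℝ, Continuous fun v : Fin d → ℝ => f' (x, v) (v, 0) := by
    intro x
    exact (hf'c.comp (continuous_const.prodMk continuous_id)).clm_apply
      (continuous_id.prodMk continuous_const)
  have hDzero : ∀ (x v : Fin d → ℝ), v ∉ K → f' (x, v) (v, 0) = 0 := by
    intro x v hv
    rw [hvan' x v hv]
    simp
  have hDint : ∀ x, Integrable (fun v : Fin d → ℝ => f' (x, v) (v, 0))
      (volume : Measure (Fin d → ℝ)) := fun x =>
    integrable_of_support_subset' hKc (hDcont x) (hDzero x)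
  have hpoint : ∀ (x v : Fin d → ℝ),
      ∑ i : Fin d, (Φ x v (Pi.single i 1)) i = f' (x, v) (v, 0) := by
    intro x v
    have h0 : ((v, (0 : Fin d → ℝ)) : (Fin d → ℝ) × (Fin d → ℝ))
        = ∑ i : Fin d, v i • ((Pi.single i 1 : Fin d → ℝ), (0 : Fin d → ℝ)) := by
      have hfst : v = ∑ i : Fin d, v i • (Pi.single i 1 : Fin d → ℝ) := by
        ext j
        simp [Finset.sum_apply, Pi.single_apply]
      have hsum : ∑ i : Fin d, v i • ((Pi.single i 1 : Fin d → ℝ), (0 : Fin d → ℝ))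
          = ((∑ i : Fin d, v i • (Pi.single i 1 : Fin d → ℝ)), (0 : Fin d → ℝ)) := by
        simp only [Prod.smul_mk, smul_zero]
        rw [← prod_mk_sum]
        simp
      rw [hsum, ← hfst]
    rw [h0, map_sum]
    refine Finset.sum_congr rfl fun i _ => ?_
    rw [ContinuousLinearMap.map_smul]
    simp [hΦdef, mul_comm]
  have hdiv : ∀ x : Fin d → ℝ,
      (∑ i : Fin d,
        fderiv ℝ (fun y : Fin d → ℝ => ∫ v : Fin d → ℝ, f₀ (y, v) • v) x
          (Pi.single i 1) i) = ∫ v : Fin d → ℝ, f' (x, v) (v, 0) := by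
    intro x
    rw [(hm x).fderiv]
    have h1 : ∀ i : Fin d,
        ((∫ v : Fin d → ℝ, Φ x v) (Pi.single i 1)) i
          = ∫ v : Fin d → ℝ, (Φ x v (Pi.single i 1)) i := by
      intro i
      rw [ContinuousLinearMap.integral_apply (hΦint x) (Pi.single i 1)]
      exact (((ContinuousLinearMap.proj i : ((Fin d → ℝ)) →L[ℝ] ℝ)).integral_comp_comm
        ((hΦint x).apply_continuousLinearMap _)).symm
    calc (∑ i : Fin d, ((∫ v : Fin d → ℝ, Φ x v) (Pi.single i 1)) i)
        = ∑ i : Fin d, ∫ v : Fin d → ℝ, (Φ x v (Pi.single i 1)) i := by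
          exact Finset.sum_congr rfl fun i _ => h1 i
      _ = ∫ v : Fin d → ℝ, ∑ i : Fin d, (Φ x v (Pi.single i 1)) i := by
          rw [integral_finset_sum]
          exact fun i _ => happlyint x i
      _ = ∫ v : Fin d → ℝ, f' (x, v) (v, 0) := by
          congr 1
          ext v
          exact hpoint x v
  -- Taylor estimate
  have hlip : ∀ a b : (Fin d → ℝ) × (Fin d → ℝ), ‖f' a - f' b‖ ≤ M₂ * ‖a - b‖ := by
    intro a b
    exact Convex.norm_image_sub_le_of_norm_fderiv_le (fun p _ => hf'd p)
      (fun p _ => hM₂ p) convex_univ (Set.mem_univ b) (Set.mem_univ a)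
  have hTaylor : ∀ (x : Fin d → ℝ) (h : ℝ) (v : Fin d → ℝ),
      |f₀ (x - h • v, v) - f₀ (x, v) + h * f' (x, v) (v, 0)| ≤ M₂ * (h ^ 2 * ‖v‖ ^ 2) := by
    intro x h v
    set w : Fin d → ℝ := h • v with hwdef
    have hg : ∀ t : ℝ, HasDerivAt (fun t : ℝ => f₀ (x - t • w, v))
        (f' (x - t • w, v) (-w, 0)) t := by
      intro t
      have hp : HasDerivAt (fun t : ℝ => ((x - t • w, v) : (Fin d → ℝ) × (Fin d → ℝ)))
          ((-w, 0)) t := by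
        have h1 : HasDerivAt (fun t : ℝ => x - t • w) (-w) t := by
          simpa using (HasDerivAt.const_sub x ((hasDerivAt_id t).smul_const w))
        exact h1.prodMk (hasDerivAt_const t v)
      exact (hfd (x - t • w, v)).hasFDerivAt.comp_hasDerivAt t hp
    have hφ : ∀ t ∈ Set.Icc (0 : ℝ) 1, HasDerivWithinAt
        (fun t : ℝ => f₀ (x - t • w, v) + t * f' (x, v) (w, 0))
        (f' (x - t • w, v) (-w, 0) + f' (x, v) (w, 0)) (Set.Icc (0 : ℝ) 1) t := by
      intro t _
      have h2 : HasDerivAt (fun t : ℝ => t * f' (x, v) (w, 0)) (f' (x, v) (w, 0)) t := by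
        simpa using (hasDerivAt_id t).mul_const (f' (x, v) (w, 0))
      exact ((hg t).add h2).hasDerivWithinAt
    have hbound : ∀ t ∈ Set.Ico (0 : ℝ) 1,
        ‖f' (x - t • w, v) (-w, 0) + f' (x, v) (w, 0)‖ ≤ M₂ * ‖w‖ * ‖w‖ := by
      intro t ht
      have hneg : ((-w, (0 : Fin d → ℝ)) : (Fin d → ℝ) × (Fin d → ℝ))
          = -((w, (0 : Fin d → ℝ))) := by simp [Prod.ext_iff]
      have h3 : f' (x - t • w, v) (-w, 0) + f' (x, v) (w, 0)
          = (f' (x, v) - f' (x - t • w, v)) ((w, 0)) := by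
        rw [hneg, map_neg, ContinuousLinearMap.sub_apply]
        ring
      rw [h3]
      have h4 : ‖((w, (0 : Fin d → ℝ)) : (Fin d → ℝ) × (Fin d → ℝ))‖ = ‖w‖ := by
        simp [Prod.norm_def]
      have h5 : ‖((x, v) : (Fin d → ℝ) × (Fin d → ℝ)) - (x - t • w, v)‖ ≤ ‖w‖ := by
        have : ((x, v) : (Fin d → ℝ) × (Fin d → ℝ)) - (x - t • w, v) = (t • w, 0) := by
          simp [Prod.ext_iff]
        rw [this]
        have : ‖((t • w, (0 : Fin d → ℝ)) : (Fin d → ℝ) × (Fin d → ℝ))‖ = |t| * ‖w‖ := by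
          simp [Prod.norm_def, norm_smul]
          positivity
        rw [this]
        have ht1 : |t| ≤ 1 := by
          rw [abs_of_nonneg ht.1]
          exact le_of_lt ht.2
        calc |t| * ‖w‖ ≤ 1 * ‖w‖ := mul_le_mul_of_nonneg_right ht1 (norm_nonneg _)
          _ = ‖w‖ := one_mul _
      calc ‖(f' (x, v) - f' (x - t • w, v)) ((w, 0))‖
          ≤ ‖f' (x, v) - f' (x - t • w, v)‖ *
            ‖((w, (0 : Fin d → ℝ)) : (Fin d → ℝ) × (Fin d → ℝ))‖ :=
            ContinuousLinearMap.le_opNorm _ _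
        _ ≤ (M₂ * ‖((x, v) : (Fin d → ℝ) × (Fin d → ℝ)) - (x - t • w, v)‖) * ‖w‖ := by
            rw [h4]
            exact mul_le_mul_of_nonneg_right (hlip _ _) (norm_nonneg _)
        _ ≤ M₂ * ‖w‖ * ‖w‖ := by
            have := mul_le_mul_of_nonneg_left h5 hM₂0
            nlinarith [norm_nonneg w]
    have key := norm_image_sub_le_of_norm_deriv_le_segment' hφ hbound 1
      (Set.right_mem_Icc.2 zero_le_one)
    have hval : (fun t : ℝ => f₀ (x - t • w, v) + t * f' (x, v) (w, 0)) 1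
        - (fun t : ℝ => f₀ (x - t • w, v) + t * f' (x, v) (w, 0)) 0
        = f₀ (x - h • v, v) - f₀ (x, v) + h * f' (x, v) (v, 0) := by
      have hw0 : ((w, (0 : Fin d → ℝ)) : (Fin d → ℝ) × (Fin d → ℝ))
          = h • ((v, (0 : Fin d → ℝ))) := by simp [hwdef, Prod.ext_iff]
      have : f' (x, v) (w, 0) = h * f' (x, v) (v, 0) := by
        rw [hw0, ContinuousLinearMap.map_smul, smul_eq_mul]
      simp only [one_smul, zero_smul, sub_zero, one_mul, zero_mul, add_zero, this]
      ring
    rw [hval] at key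
    have hwsq : ‖w‖ * ‖w‖ = h ^ 2 * ‖v‖ ^ 2 := by
      rw [hwdef, norm_smul, Real.norm_eq_abs]
      ring_nf
      rw [sq_abs]
      ring
    calc |f₀ (x - h • v, v) - f₀ (x, v) + h * f' (x, v) (v, 0)|
        ≤ M₂ * ‖w‖ * ‖w‖ * (1 - 0) := key
      _ = M₂ * (‖w‖ * ‖w‖) := by ring
      _ = M₂ * (h ^ 2 * ‖v‖ ^ 2) := by rw [hwsq]
  -- conclusion
  refine ⟨(volume K).toReal * (M₂ * R ^ 2), ?_, ?_⟩
  · positivity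
  intro x h _
  have hAint : Integrable (fun v : Fin d → ℝ => f₀ (x - h • v, v))
      (volume : Measure (Fin d → ℝ)) := by
    refine integrable_of_support_subset' hKc ?_ ?_
    · exact hfc.comp ((continuous_const.sub (continuous_id.const_smul h)).prodMk continuous_id)
    · intro v hv
      exact hvan _ v hv
  have hBint : Integrable (fun v : Fin d → ℝ => f₀ (x, v))
      (volume : Measure (Fin d → ℝ)) := by
    refine integrable_of_support_subset' hKc
      (hfc.comp (continuous_const.prodMk continuous_id)) fun v hv => hvan _ v hv
  set G : (Fin d → ℝ) → ℝ :=
    fun v => f₀ (x - h • v, v) - f₀ (x, v) + h * f' (x, v) (v, 0) with hGdef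
  have hGint : ∫ v : Fin d → ℝ, G v
      = (∫ v : Fin d → ℝ, f₀ (x - h • v, v)) - (∫ v : Fin d → ℝ, f₀ (x, v))
        + h * ∫ v : Fin d → ℝ, f' (x, v) (v, 0) := by
    have h1 : Integrable (fun v : Fin d → ℝ => f₀ (x - h • v, v) - f₀ (x, v))
        (volume : Measure (Fin d → ℝ)) := hAint.sub hBint
    have h2 : Integrable (fun v : Fin d → ℝ => h * f' (x, v) (v, 0))
        (volume : Measure (Fin d → ℝ)) := (hDint x).const_mul h
    rw [hGdef]
    rw [integral_add h1 h2, integral_sub hAint hBint, integral_const_mul]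
  have hGbound : ∀ v : Fin d → ℝ,
      ‖G v‖ ≤ K.indicator (fun _ => M₂ * R ^ 2 * h ^ 2) v := by
    intro v
    by_cases hv : v ∈ K
    · rw [Set.indicator_of_mem hv, Real.norm_eq_abs]
      refine (hTaylor x h v).trans ?_
      have hvR : ‖v‖ ^ 2 ≤ R ^ 2 := by
        have := hR v hv
        nlinarith [norm_nonneg v]
      nlinarith [mul_le_mul_of_nonneg_left hvR (mul_nonneg hM₂0 (sq_nonneg h))]
    · rw [Set.indicator_of_notMem hv, hGdef]
      simp only [hvan _ v hv, hDzero x v hv]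
      simp
  have hGintbl : Integrable (K.indicator fun _ => M₂ * R ^ 2 * h ^ 2)
      (volume : Measure (Fin d → ℝ)) := by
    rw [integrable_indicator_iff hKmeas]
    exact integrableOn_const hKc.measure_lt_top.ne
  have hmain : ‖∫ v : Fin d → ℝ, G v‖
      ≤ (volume K).toReal * (M₂ * R ^ 2 * h ^ 2) := by
    refine le_trans (norm_integral_le_of_norm_le hGintbl (ae_of_all _ hGbound)) ?_
    rw [integral_indicator_const _ hKmeas]
    simp [smul_eq_mul, measureReal_def]
  rw [hdiv x, ← hGint]
  calc |∫ v : Fin d → ℝ, G v| ≤ (volume K).toReal * (M₂ * R ^ 2 * h ^ 2) := hmain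
    _ = (volume K).toReal * (M₂ * R ^ 2) * h ^ 2 := by ring
end

section
/- For ν ∈ ℝ and ζ ∈ ℂ define the 2×2 complex matrix G(ν,ζ) with entries G₁₁ = 1 + ν(ζ − 1), G₁₂ = √3 ν(1 − ν)(ζ − 1), G₂₁ = √3 ν(ν − 1)(ζ − 1), G₂₂ = 1 + 2ν³(1 − ζ) + 6ν²ζ − 3ν(ζ + 1). Then for every ν ∈ [0,1] and every ζ ∈ ℂ with |ζ| = 1, every eigenvalue λ of G(ν,ζ) satisfies |λ| ≤ 1. (Consequently the piecewise-linear shift-and-project semi-Lagrangian DG update is von Neumann stable for all CFL numbers 0 ≤ ν ≤ 1.) -/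
set_option maxHeartbeats 2000000 in
private lemma keyR (a x y s u1 u2 w1 w2 : ℝ) (ha0 : 0 ≤ a) (ha1 : a ≤ 1)
    (hxy : x^2 + y^2 = 1) (hs3 : s^2 = 3) :
    (((1+a*(x-1))*u1 - a*y*u2 + s*(a*(1-a))*(x-1)*w1 - s*(a*(1-a))*y*w2)^2
      + ((1+a*(x-1))*u2 + a*y*u1 + s*(a*(1-a))*(x-1)*w2 + s*(a*(1-a))*y*w1)^2
      + (-(s*(a*(1-a))*(x-1))*u1 + s*(a*(1-a))*y*u2
          + (1-3*a+2*a^3+(6*a^2-3*a-2*a^3)*x)*w1 - (6*a^2-3*a-2*a^3)*y*w2)^2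
      + (-(s*(a*(1-a))*(x-1))*u2 - s*(a*(1-a))*y*u1
          + (1-3*a+2*a^3+(6*a^2-3*a-2*a^3)*x)*w2 + (6*a^2-3*a-2*a^3)*y*w1)^2)
    ≤ u1^2 + u2^2 + w1^2 + w2^2 := by
  rcases eq_or_lt_of_le ha0 with h0 | h0
  · have h : (((1+a*(x-1))*u1 - a*y*u2 + s*(a*(1-a))*(x-1)*w1 - s*(a*(1-a))*y*w2)^2
      + ((1+a*(x-1))*u2 + a*y*u1 + s*(a*(1-a))*(x-1)*w2 + s*(a*(1-a))*y*w1)^2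
      + (-(s*(a*(1-a))*(x-1))*u1 + s*(a*(1-a))*y*u2
          + (1-3*a+2*a^3+(6*a^2-3*a-2*a^3)*x)*w1 - (6*a^2-3*a-2*a^3)*y*w2)^2
      + (-(s*(a*(1-a))*(x-1))*u2 - s*(a*(1-a))*y*u1
          + (1-3*a+2*a^3+(6*a^2-3*a-2*a^3)*x)*w2 + (6*a^2-3*a-2*a^3)*y*w1)^2) = u1^2 + u2^2 + w1^2 + w2^2 := by
      rw [← h0]; ring
    linarith
  rcases eq_or_lt_of_le ha1 with h1 | h1
  · have h : (((1+a*(x-1))*u1 - a*y*u2 + s*(a*(1-a))*(x-1)*w1 - s*(a*(1-a))*y*w2)^2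
      + ((1+a*(x-1))*u2 + a*y*u1 + s*(a*(1-a))*(x-1)*w2 + s*(a*(1-a))*y*w1)^2
      + (-(s*(a*(1-a))*(x-1))*u1 + s*(a*(1-a))*y*u2
          + (1-3*a+2*a^3+(6*a^2-3*a-2*a^3)*x)*w1 - (6*a^2-3*a-2*a^3)*y*w2)^2
      + (-(s*(a*(1-a))*(x-1))*u2 - s*(a*(1-a))*y*u1
          + (1-3*a+2*a^3+(6*a^2-3*a-2*a^3)*x)*w2 + (6*a^2-3*a-2*a^3)*y*w1)^2) = (x^2+y^2) * (u1^2 + u2^2 + w1^2 + w2^2) := by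
      rw [h1]; ring
    rw [hxy] at h; linarith
  -- main case 0 < a < 1
  have hx1 : x ≤ 1 := by nlinarith [sq_nonneg y, sq_nonneg (x-1)]
  have hx2 : -1 ≤ x := by nlinarith [sq_nonneg y, sq_nonneg (x+1)]
  have hb : 0 < a * (1-a) := by nlinarith
  have hP1 : (0:ℝ) ≤ 4*a^4-8*a^3+7*a^2-3*a+1 := by
    nlinarith [sq_nonneg (a*(a-1)), sq_nonneg (2*a-1)]
  have hP2 : (0:ℝ) ≤ 3*a^2-3*a+1 := by nlinarith [sq_nonneg (2*a-1)]
  have hT : 0 < 8*a + 4*a*x - 32*a^2 - 16*a^2*x + 56*a^3 + 16*a^3*x - 48*a^4 + 12*a^4*x + 24*a^5 - 24*a^5*x - 8*a^6 + 8*a^6*x := by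
    nlinarith [mul_pos hb hb, mul_nonneg (mul_nonneg (sub_nonneg.2 hx1) hP1) hb.le,
      mul_nonneg (mul_nonneg (by linarith : (0:ℝ) ≤ 1+x) hP2) hb.le,
      mul_pos hb (show (0:ℝ) < 3*a^2-3*a+1 by nlinarith [sq_nonneg (2*a-1)])]
  have hid : (8*a + 4*a*x - 32*a^2 - 16*a^2*x + 56*a^3 + 16*a^3*x - 48*a^4 + 12*a^4*x + 24*a^5 - 24*a^5*x - 8*a^6 + 8*a^6*x) *
      ((u1^2 + u2^2 + w1^2 + w2^2) - (((1+a*(x-1))*u1 - a*y*u2 + s*(a*(1-a))*(x-1)*w1 - s*(a*(1-a))*y*w2)^2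
      + ((1+a*(x-1))*u2 + a*y*u1 + s*(a*(1-a))*(x-1)*w2 + s*(a*(1-a))*y*w1)^2
      + (-(s*(a*(1-a))*(x-1))*u1 + s*(a*(1-a))*y*u2
          + (1-3*a+2*a^3+(6*a^2-3*a-2*a^3)*x)*w1 - (6*a^2-3*a-2*a^3)*y*w2)^2
      + (-(s*(a*(1-a))*(x-1))*u2 - s*(a*(1-a))*y*u1
          + (1-3*a+2*a^3+(6*a^2-3*a-2*a^3)*x)*w2 + (6*a^2-3*a-2*a^3)*y*w1)^2)) =
      (2*a*u1 + 2*a*y*s*w2 - 2*a*x*u1 - 8*a^2*u1 - 2*a^2*s*w1 - 8*a^2*y*s*w2 + 8*a^2*x*u1 + 2*a^2*x*s*w1 + 12*a^3*u1 + 8*a^3*s*w1 + 12*a^3*y*s*w2 - 12*a^3*x*u1 - 8*a^3*x*s*w1 - 6*a^4*u1 - 10*a^4*s*w1 - 6*a^4*y*s*w2 + 6*a^4*x*u1 + 10*a^4*x*s*w1 + 4*a^5*s*w1 - 4*a^5*x*s*w1)^2 + (2*a*u2 - 2*a*y*s*w1 - 2*a*x*u2 - 8*a^2*u2 - 2*a^2*s*w2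 + 8*a^2*y*s*w1 + 8*a^2*x*u2 + 2*a^2*x*s*w2 + 12*a^3*u2 + 8*a^3*s*w2 - 12*a^3*y*s*w1 - 12*a^3*x*u2 - 8*a^3*x*s*w2 - 6*a^4*u2 - 10*a^4*s*w2 + 6*a^4*y*s*w1 + 6*a^4*x*u2 + 10*a^4*x*s*w2 + 4*a^5*s*w2 - 4*a^5*x*s*w2)^2 + (6*a*w1 - 2*a*y*s*u2 + 6*a*x*w1 - 24*a^2*w1 - 2*a^2*s*u1 + 8*a^2*y*s*u2 - 24*a^2*x*w1 + 2*a^2*x*s*u1 + 44*a^3*w1 + 8*a^3*s*u1 - 12*a^3*y*s*u2 + 28*a^3*x*w1 - 8*a^3*x*s*u1 - 42*a^4*w1 - 10*a^4*s*u1 + 6*a^4*y*s*u2 + 6*a^4*x*w1 + 10*a^4*x*s*u1 + 24*a^5*w1 + 4*a^5*s*u1 - 24*a^5*x*w1 - 4*a^5*x*s*u1 - 8*a^6*w1 + 8*a^6*x*w1)^2 + (6*a*w2 + 2*a*y*s*u1 + 6*a*x*w2 - 24*a^2*w2 - 2*a^2*s*u2 - 8*a^2*y*s*u1 - 24*a^2*x*w2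 + 2*a^2*x*s*u2 + 44*a^3*w2 + 8*a^3*s*u2 + 12*a^3*y*s*u1 + 28*a^3*x*w2 - 8*a^3*x*s*u2 - 42*a^4*w2 - 10*a^4*s*u2 - 6*a^4*y*s*u1 + 6*a^4*x*w2 + 10*a^4*x*s*u2 + 24*a^5*w2 + 4*a^5*s*u2 - 24*a^5*x*w2 - 4*a^5*x*s*u2 - 8*a^6*w2 + 8*a^6*x*w2)^2
        + (2*a^2 - 2*a^2*x - 4*a^3 + 4*a^3*x + 2*a^4 - 2*a^4*x)^2 * (u1^2 + u2^2 + w1^2 + w2^2) := by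
    linear_combination (-12*a^2*w2^2 - 12*a^2*w1^2 - 12*a^2*u2^2 - 12*a^2*u1^2 + 64*a^3*u2^2 + 64*a^3*u1^2 - 64*a^3*s*u2*w2 - 64*a^3*s*u1*w1 - 48*a^3*x*w2^2 - 48*a^3*x*w1^2 - 16*a^3*x*u2^2 - 16*a^3*x*u1^2 - 32*a^3*x*s*u2*w2 - 32*a^3*x*s*u1*w1 + 384*a^4*w2^2 + 384*a^4*w1^2 - 160*a^4*u2^2 - 160*a^4*u1^2 + 416*a^4*s*u2*w2 + 416*a^4*s*u1*w1 + 360*a^4*x*w2^2 + 360*a^4*x*w1^2 + 88*a^4*x*u2^2 + 88*a^4*x*u1^2 + 208*a^4*x*s*u2*w2 + 208*a^4*x*s*u1*w1 - 1776*a^5*w2^2 - 1776*a^5*w1^2 + 208*a^5*u2^2 + 208*a^5*u1^2 - 1216*a^5*s*u2*w2 - 1216*a^5*s*u1*w1 - 1068*a^5*x*w2^2 - 1068*a^5*x*w1^2 - 172*a^5*x*u2^2 - 172*a^5*x*u1^2 - 512*a^5*x*s*u2*w2 - 512*a^5*x*s*u1*w1 + 4032*a^6*w2^2 + 4032*a^6*w1^2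 - 96*a^6*u2^2 - 96*a^6*u1^2 + 2048*a^6*s*u2*w2 + 2048*a^6*s*u1*w1 + 1440*a^6*x*w2^2 + 1440*a^6*x*w1^2 + 96*a^6*x*u2^2 + 96*a^6*x*u1^2 + 496*a^6*x*s*u2*w2 + 496*a^6*x*s*u1*w1 - 5528*a^7*w2^2 - 5528*a^7*w1^2 - 120*a^7*u2^2 - 120*a^7*u1^2 - 2176*a^7*s*u2*w2 - 2176*a^7*s*u1*w1 - 424*a^7*x*w2^2 - 424*a^7*x*w1^2 + 120*a^7*x*u2^2 + 120*a^7*x*u1^2 + 112*a^7*x*s*u2*w2 + 112*a^7*x*s*u1*w1 + 4916*a^8*w2^2 + 4916*a^8*w1^2 + 212*a^8*u2^2 + 212*a^8*u1^2 + 1536*a^8*s*u2*w2 + 1536*a^8*s*u1*w1 - 1268*a^8*x*w2^2 - 1268*a^8*x*w1^2 - 212*a^8*x*u2^2 - 212*a^8*x*u1^2 - 672*a^8*x*s*u2*w2 - 672*a^8*x*s*u1*w1 - 2936*a^9*w2^2 - 2936*a^9*w1^2 - 120*a^9*u2^2 - 120*a^9*u1^2 - 736*a^9*s*u2*w2 -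 736*a^9*s*u1*w1 + 1784*a^9*x*w2^2 + 1784*a^9*x*w1^2 + 120*a^9*x*u2^2 + 120*a^9*x*u1^2 + 592*a^9*x*s*u2*w2 + 592*a^9*x*s*u1*w1 + 1176*a^10*w2^2 + 1176*a^10*w1^2 + 24*a^10*u2^2 + 24*a^10*u1^2 + 224*a^10*s*u2*w2 + 224*a^10*s*u1*w1 - 1032*a^10*x*w2^2 - 1032*a^10*x*w1^2 - 24*a^10*x*u2^2 - 24*a^10*x*u1^2 - 224*a^10*x*s*u2*w2 - 224*a^10*x*s*u1*w1 - 288*a^11*w2^2 - 288*a^11*w1^2 - 32*a^11*s*u2*w2 - 32*a^11*s*u1*w1 + 288*a^11*x*w2^2 + 288*a^11*x*w1^2 + 32*a^11*x*s*u2*w2 + 32*a^11*x*s*u1*w1 + 32*a^12*w2^2 + 32*a^12*w1^2 - 32*a^12*x*w2^2 - 32*a^12*x*w1^2) * hxy + (-4*a^2*y^2*w2^2 - 4*a^2*y^2*w1^2 - 4*a^2*y^2*u2^2 - 4*a^2*y^2*u1^2 - 8*a^3*w2^2 - 8*a^3*w1^2 - 8*a^3*u2^2 - 8*a^3*u1^2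 + 24*a^3*y^2*w2^2 + 24*a^3*y^2*w1^2 + 24*a^3*y^2*u2^2 + 24*a^3*y^2*u1^2 + 12*a^3*x*w2^2 + 12*a^3*x*w1^2 + 12*a^3*x*u2^2 + 12*a^3*x*u1^2 - 4*a^3*x*y^2*w2^2 - 4*a^3*x*y^2*w1^2 - 4*a^3*x*y^2*u2^2 - 4*a^3*x*y^2*u1^2 - 4*a^3*x^3*w2^2 - 4*a^3*x^3*w1^2 - 4*a^3*x^3*u2^2 - 4*a^3*x^3*u1^2 + 44*a^4*w2^2 + 44*a^4*w1^2 + 44*a^4*u2^2 + 44*a^4*u1^2 - 64*a^4*y^2*w2^2 - 64*a^4*y^2*w1^2 - 64*a^4*y^2*u2^2 - 64*a^4*y^2*u1^2 - 64*a^4*x*w2^2 - 64*a^4*x*w1^2 - 64*a^4*x*u2^2 - 64*a^4*x*u1^2 + 24*a^4*x*y^2*w2^2 + 24*a^4*x*y^2*w1^2 + 24*a^4*x*y^2*u2^2 + 24*a^4*x*y^2*u1^2 - 4*a^4*x^2*w2^2 - 4*a^4*x^2*w1^2 - 4*a^4*x^2*u2^2 - 4*a^4*x^2*u1^2 + 24*a^4*x^3*w2^2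 + 24*a^4*x^3*w1^2 + 24*a^4*x^3*u2^2 + 24*a^4*x^3*u1^2 - 96*a^5*w2^2 - 96*a^5*w1^2 - 96*a^5*u2^2 - 96*a^5*u1^2 + 88*a^5*y^2*w2^2 + 88*a^5*y^2*w1^2 + 88*a^5*y^2*u2^2 + 88*a^5*y^2*u1^2 + 140*a^5*x*w2^2 + 140*a^5*x*w1^2 + 140*a^5*x*u2^2 + 140*a^5*x*u1^2 - 52*a^5*x*y^2*w2^2 - 52*a^5*x*y^2*w1^2 - 52*a^5*x*y^2*u2^2 - 52*a^5*x*y^2*u1^2 + 8*a^5*x^2*w2^2 + 8*a^5*x^2*w1^2 + 8*a^5*x^2*u2^2 + 8*a^5*x^2*u1^2 - 52*a^5*x^3*w2^2 - 52*a^5*x^3*w1^2 - 52*a^5*x^3*u2^2 - 52*a^5*x^3*u1^2 + 88*a^6*w2^2 + 88*a^6*w1^2 + 88*a^6*u2^2 + 88*a^6*u1^2 - 48*a^6*y^2*w2^2 - 48*a^6*y^2*w1^2 - 48*a^6*y^2*u2^2 - 48*a^6*y^2*u1^2 - 140*a^6*x*w2^2 - 140*a^6*x*w1^2 - 140*a^6*x*u2^2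 - 140*a^6*x*u1^2 + 36*a^6*x*y^2*w2^2 + 36*a^6*x*y^2*w1^2 + 36*a^6*x*y^2*u2^2 + 36*a^6*x*y^2*u1^2 + 16*a^6*x^2*w2^2 + 16*a^6*x^2*w1^2 + 16*a^6*x^2*u2^2 + 16*a^6*x^2*u1^2 + 36*a^6*x^3*w2^2 + 36*a^6*x^3*w1^2 + 36*a^6*x^3*u2^2 + 36*a^6*x^3*u1^2 - 32*a^7*y^2*w2^2 - 32*a^7*y^2*w1^2 - 32*a^7*y^2*u2^2 - 32*a^7*y^2*u1^2 + 32*a^7*x*w2^2 + 32*a^7*x*w1^2 + 32*a^7*x*u2^2 + 32*a^7*x*u1^2 + 32*a^7*x*y^2*w2^2 + 32*a^7*x*y^2*w1^2 + 32*a^7*x*y^2*u2^2 + 32*a^7*x*y^2*u1^2 - 64*a^7*x^2*w2^2 - 64*a^7*x^2*w1^2 - 64*a^7*x^2*u2^2 - 64*a^7*x^2*u1^2 + 32*a^7*x^3*w2^2 + 32*a^7*x^3*w1^2 + 32*a^7*x^3*u2^2 + 32*a^7*x^3*u1^2 - 60*a^8*w2^2 - 60*a^8*w1^2 - 60*a^8*u2^2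 - 60*a^8*u1^2 + 68*a^8*y^2*w2^2 + 68*a^8*y^2*w1^2 + 68*a^8*y^2*u2^2 + 68*a^8*y^2*u1^2 + 52*a^8*x*w2^2 + 52*a^8*x*w1^2 + 52*a^8*x*u2^2 + 52*a^8*x*u1^2 - 68*a^8*x*y^2*w2^2 - 68*a^8*x*y^2*w1^2 - 68*a^8*x*y^2*u2^2 - 68*a^8*x*y^2*u1^2 + 76*a^8*x^2*w2^2 + 76*a^8*x^2*w1^2 + 76*a^8*x^2*u2^2 + 76*a^8*x^2*u1^2 - 68*a^8*x^3*w2^2 - 68*a^8*x^3*w1^2 - 68*a^8*x^3*u2^2 - 68*a^8*x^3*u1^2 + 40*a^9*w2^2 + 40*a^9*w1^2 + 40*a^9*u2^2 + 40*a^9*u1^2 - 40*a^9*y^2*w2^2 - 40*a^9*y^2*w1^2 - 40*a^9*y^2*u2^2 - 40*a^9*y^2*u1^2 - 40*a^9*x*w2^2 - 40*a^9*x*w1^2 - 40*a^9*x*u2^2 - 40*a^9*x*u1^2 + 40*a^9*x*y^2*w2^2 + 40*a^9*x*y^2*w1^2 + 40*a^9*x*y^2*u2^2 + 40*a^9*x*y^2*u1^2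 - 40*a^9*x^2*w2^2 - 40*a^9*x^2*w1^2 - 40*a^9*x^2*u2^2 - 40*a^9*x^2*u1^2 + 40*a^9*x^3*w2^2 + 40*a^9*x^3*w1^2 + 40*a^9*x^3*u2^2 + 40*a^9*x^3*u1^2 - 8*a^10*w2^2 - 8*a^10*w1^2 - 8*a^10*u2^2 - 8*a^10*u1^2 + 8*a^10*y^2*w2^2 + 8*a^10*y^2*w1^2 + 8*a^10*y^2*u2^2 + 8*a^10*y^2*u1^2 + 8*a^10*x*w2^2 + 8*a^10*x*w1^2 + 8*a^10*x*u2^2 + 8*a^10*x*u1^2 - 8*a^10*x*y^2*w2^2 - 8*a^10*x*y^2*w1^2 - 8*a^10*x*y^2*u2^2 - 8*a^10*x*y^2*u1^2 + 8*a^10*x^2*w2^2 + 8*a^10*x^2*w1^2 + 8*a^10*x^2*u2^2 + 8*a^10*x^2*u1^2 - 8*a^10*x^3*w2^2 - 8*a^10*x^3*w1^2 - 8*a^10*x^3*u2^2 - 8*a^10*x^3*u1^2) * hs3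
  have hS : (0:ℝ) ≤ (2*a*u1 + 2*a*y*s*w2 - 2*a*x*u1 - 8*a^2*u1 - 2*a^2*s*w1 - 8*a^2*y*s*w2 + 8*a^2*x*u1 + 2*a^2*x*s*w1 + 12*a^3*u1 + 8*a^3*s*w1 + 12*a^3*y*s*w2 - 12*a^3*x*u1 - 8*a^3*x*s*w1 - 6*a^4*u1 - 10*a^4*s*w1 - 6*a^4*y*s*w2 + 6*a^4*x*u1 + 10*a^4*x*s*w1 + 4*a^5*s*w1 - 4*a^5*x*s*w1)^2 + (2*a*u2 - 2*a*y*s*w1 - 2*a*x*u2 - 8*a^2*u2 - 2*a^2*s*w2 + 8*a^2*y*s*w1 + 8*a^2*x*u2 + 2*a^2*x*s*w2 + 12*a^3*u2 + 8*a^3*s*w2 - 12*a^3*y*s*w1 - 12*a^3*x*u2 - 8*a^3*x*s*w2 - 6*a^4*u2 - 10*a^4*s*w2 + 6*a^4*y*s*w1 + 6*a^4*x*u2 + 10*a^4*x*s*w2 + 4*a^5*s*w2 - 4*a^5*x*s*w2)^2 + (6*a*w1 - 2*a*y*s*u2 + 6*a*x*w1 - 24*a^2*w1 - 2*a^2*s*u1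 + 8*a^2*y*s*u2 - 24*a^2*x*w1 + 2*a^2*x*s*u1 + 44*a^3*w1 + 8*a^3*s*u1 - 12*a^3*y*s*u2 + 28*a^3*x*w1 - 8*a^3*x*s*u1 - 42*a^4*w1 - 10*a^4*s*u1 + 6*a^4*y*s*u2 + 6*a^4*x*w1 + 10*a^4*x*s*u1 + 24*a^5*w1 + 4*a^5*s*u1 - 24*a^5*x*w1 - 4*a^5*x*s*u1 - 8*a^6*w1 + 8*a^6*x*w1)^2 + (6*a*w2 + 2*a*y*s*u1 + 6*a*x*w2 - 24*a^2*w2 - 2*a^2*s*u2 - 8*a^2*y*s*u1 - 24*a^2*x*w2 + 2*a^2*x*s*u2 + 44*a^3*w2 + 8*a^3*s*u2 + 12*a^3*y*s*u1 + 28*a^3*x*w2 - 8*a^3*x*s*u2 - 42*a^4*w2 - 10*a^4*s*u2 - 6*a^4*y*s*u1 + 6*a^4*x*w2 + 10*a^4*x*s*u2 + 24*a^5*w2 + 4*a^5*s*u2 - 24*a^5*x*w2 - 4*a^5*x*s*u2 - 8*a^6*w2 + 8*a^6*x*w2)^2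
        + (2*a^2 - 2*a^2*x - 4*a^3 + 4*a^3*x + 2*a^4 - 2*a^4*x)^2 * (u1^2 + u2^2 + w1^2 + w2^2) := by positivity
  rcases lt_or_ge ((u1^2 + u2^2 + w1^2 + w2^2) - (((1+a*(x-1))*u1 - a*y*u2 + s*(a*(1-a))*(x-1)*w1 - s*(a*(1-a))*y*w2)^2
      + ((1+a*(x-1))*u2 + a*y*u1 + s*(a*(1-a))*(x-1)*w2 + s*(a*(1-a))*y*w1)^2
      + (-(s*(a*(1-a))*(x-1))*u1 + s*(a*(1-a))*y*u2
          + (1-3*a+2*a^3+(6*a^2-3*a-2*a^3)*x)*w1 - (6*a^2-3*a-2*a^3)*y*w2)^2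
      + (-(s*(a*(1-a))*(x-1))*u2 - s*(a*(1-a))*y*u1
          + (1-3*a+2*a^3+(6*a^2-3*a-2*a^3)*x)*w2 + (6*a^2-3*a-2*a^3)*y*w1)^2)) 0 with hneg | hpos
  · exfalso
    have := mul_neg_of_pos_of_neg hT hneg
    linarith [hid ▸ this]
  · linarith


set_option maxHeartbeats 1000000 in
private lemma keyC (a : ℝ) (ha0 : 0 ≤ a) (ha1 : a ≤ 1) (ζ : ℂ)
    (hζ : Complex.normSq ζ = 1) (u w : ℂ) :
    Complex.normSq ((1 + (a : ℂ) * (ζ - 1)) * u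
        + ((Real.sqrt 3 : ℂ) * (a : ℂ) * (1 - (a : ℂ)) * (ζ - 1)) * w)
      + Complex.normSq (((Real.sqrt 3 : ℂ) * (a : ℂ) * ((a : ℂ) - 1) * (ζ - 1)) * u
        + (1 + 2 * (a : ℂ) ^ 3 * (1 - ζ) + 6 * (a : ℂ) ^ 2 * ζ - 3 * (a : ℂ) * (ζ + 1)) * w)
      ≤ Complex.normSq u + Complex.normSq w := by
  have hs3 : (Real.sqrt 3)^2 = 3 := Real.sq_sqrt (by norm_num)
  have hxy : ζ.re^2 + ζ.im^2 = 1 := by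
    rw [Complex.normSq_apply] at hζ; nlinarith [hζ]
  have H := keyR a ζ.re ζ.im (Real.sqrt 3) u.re u.im w.re w.im ha0 ha1 hxy hs3
  simp only [Complex.normSq_apply, Complex.add_re, Complex.add_im, Complex.mul_re,
    Complex.mul_im, Complex.sub_re, Complex.sub_im, Complex.one_re, Complex.one_im,
    Complex.ofReal_re, Complex.ofReal_im, pow_succ, pow_zero, one_mul,
    Complex.re_ofNat, Complex.im_ofNat]
  linarith [H]

/-- The von Neumann amplification matrix of the piecewise-linear shift-and-project
semi-Lagrangian DG scheme. -/
noncomputable def slDGAmpMatrix (ν : ℝ) (ζ : ℂ) : Matrix (Fin 2) (Fin 2) ℂ :=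
  !![1 + (ν : ℂ) * (ζ - 1),
     (Real.sqrt 3 : ℂ) * (ν : ℂ) * (1 - (ν : ℂ)) * (ζ - 1);
     (Real.sqrt 3 : ℂ) * (ν : ℂ) * ((ν : ℂ) - 1) * (ζ - 1),
     1 + 2 * (ν : ℂ) ^ 3 * (1 - ζ) + 6 * (ν : ℂ) ^ 2 * ζ - 3 * (ν : ℂ) * (ζ + 1)]

/-- The piecewise-linear shift-and-project semi-Lagrangian DG update is von Neumann
stable for all CFL numbers `0 ≤ ν ≤ 1`. -/
theorem slDG_stable (ν : ℝ) (hν : ν ∈ Set.Icc (0 : ℝ) 1) (ζ : ℂ) (hζ : ‖ζ‖ = 1)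
    (lam : ℂ) (hlam : lam ∈ spectrum ℂ (slDGAmpMatrix ν ζ)) : ‖lam‖ ≤ 1 := by
  have hlam' : lam ∈ spectrum ℂ (Matrix.toLinAlgEquiv' (slDGAmpMatrix ν ζ)) := by
    rwa [AlgEquiv.spectrum_eq]
  have hev : Module.End.HasEigenvalue (Matrix.toLinAlgEquiv' (slDGAmpMatrix ν ζ) :
      Module.End ℂ (Fin 2 → ℂ)) lam :=
    Module.End.hasEigenvalue_iff_mem_spectrum.mpr hlam'
  obtain ⟨v, hv⟩ := hev.exists_hasEigenvector
  have hveq : (slDGAmpMatrix ν ζ).mulVec v = lam • v := by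
    have := hv.apply_eq_smul
    rwa [Matrix.toLinAlgEquiv'_apply] at this
  have e0' := congrFun hveq 0
  have e1' := congrFun hveq 1
  simp [slDGAmpMatrix, Matrix.mulVec, dotProduct, Fin.sum_univ_two, Matrix.vecHead, Matrix.vecTail] at e0' e1'
  have e0 : (1 + (ν : ℂ) * (ζ - 1)) * v 0
      + ((Real.sqrt 3 : ℂ) * (ν : ℂ) * (1 - (ν : ℂ)) * (ζ - 1)) * v 1 = lam * v 0 := by
    linear_combination e0'
  have e1 : ((Real.sqrt 3 : ℂ) * (ν : ℂ) * ((ν : ℂ) - 1) * (ζ - 1)) * v 0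
      + (1 + 2 * (ν : ℂ) ^ 3 * (1 - ζ) + 6 * (ν : ℂ) ^ 2 * ζ - 3 * (ν : ℂ) * (ζ + 1)) * v 1
      = lam * v 1 := by
    linear_combination e1'
  have hζ' : Complex.normSq ζ = 1 := by
    have h2 : ‖ζ‖ ^ 2 = 1 := by rw [hζ]; norm_num
    rwa [Complex.sq_norm] at h2
  have hkey := keyC ν hν.1 hν.2 ζ hζ' (v 0) (v 1)
  rw [e0, e1, Complex.normSq_mul, Complex.normSq_mul] at hkey
  have hvpos : 0 < Complex.normSq (v 0) + Complex.normSq (v 1) := by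
    rcases Classical.em (v 0 = 0) with h0 | h0
    · have h1 : v 1 ≠ 0 := by
        intro h1
        apply hv.2
        funext i
        fin_cases i <;> simp [h0, h1]
      have := Complex.normSq_pos.mpr h1
      have := Complex.normSq_nonneg (v 0)
      linarith
    · have := Complex.normSq_pos.mpr h0
      have := Complex.normSq_nonneg (v 1)
      linarith
  have hlam2 : Complex.normSq lam ≤ 1 := by
    nlinarith [hkey, hvpos]
  have : ‖lam‖ ^ 2 ≤ 1 := by
    rwa [Complex.sq_norm]
  nlinarith [norm_nonneg lam, this]
end

section
/- Fix L > 0 and integers N ≥ 1, M ≥ 1. Let V ⊆ L²(AddCircle L) be the closed subspace of those functions that agree almost everywhere on each cell I_i = [(i−1)L/N, iL/N), i = 1,…,N, with a polynomial of degree < M, and let P denote the orthogonal projection of L²(AddCircle L) onto V. Then for every f ∈ L²(AddCircle L) and every a ∈ ℝ, ∫ P(τ_a f) = ∫ f, where (τ_a f)(x) = f(x − a). In other words, each shift-and-project step of the semi-Lagrangian discontinuous Galerkin method exactly conserves the total mass. -/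
open MeasureTheory

/-- Null sets of the circle pull back to null sets of the line under the covering map. -/
lemma null_preimage_mk {L : ℝ} [hL : Fact (0 < L)] {S : Set (AddCircle L)}
    (hS : volume S = 0) :
    volume ((fun x : ℝ => (x : AddCircle L)) ⁻¹' S) = 0 := by
  set P := (fun x : ℝ => (x : AddCircle L)) ⁻¹' S with hP
  have hcover : P ⊆ ⋃ n : ℤ, P ∩ Set.Ioc (n • L) ((n + 1) • L) := by
    intro x hx
    have hx' : x ∈ ⋃ n : ℤ, Set.Ioc (n • L) ((n + 1) • L) := by
      rw [iUnion_Ioc_zsmul hL.out]; trivial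
    obtain ⟨s, ⟨n, rfl⟩, hxs⟩ := hx'
    exact Set.mem_iUnion.mpr ⟨n, hx, hxs⟩
  refine measure_mono_null hcover (measure_iUnion_null fun n => ?_)
  have h0 := (AddCircle.measurePreserving_mk L (n • L)).quasiMeasurePreserving.preimage_null hS
  rw [Measure.restrict_apply' measurableSet_Ioc] at h0
  have : (n + 1) • L = n • L + L := by rw [add_zsmul, one_zsmul]
  rw [this]
  exact h0

/-- Each shift-and-project step of the semi-Lagrangian DG method conserves total mass:
if `V` is the broken polynomial subspace of `L²(AddCircle L)` (piecewise polynomials of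
degree `< M` on the `N` congruent cells) and `g` is the translate of `f` by `a`, then the
orthogonal projection of `g` onto `V` has the same integral as `f`. -/
theorem shift_project_mass_conservation (L : ℝ) [hL : Fact (0 < L)] (N M : ℕ)
    (hN : 1 ≤ N) (hM : 1 ≤ M)
    (V : Submodule ℝ (Lp ℝ 2 (volume : Measure (AddCircle L))))
    [Submodule.HasOrthogonalProjection V]
    (hV : ∀ f : Lp ℝ 2 (volume : Measure (AddCircle L)),
      f ∈ V ↔ ∀ i : Fin N, ∃ p : Polynomial ℝ, p.degree < (M : ℕ) ∧
        ∀ᵐ x ∂(volume.restrict (Set.Ico ((i : ℕ) * L / N) (((i : ℕ) + 1) * L / N))),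
          f ((x : ℝ) : AddCircle L) = p.eval x)
    (f g : Lp ℝ 2 (volume : Measure (AddCircle L))) (a : ℝ)
    (hg : (g : AddCircle L → ℝ) =ᵐ[volume] fun x => f (x - ((a : ℝ) : AddCircle L))) :
    ∫ x : AddCircle L, (Submodule.orthogonalProjectionOnto V g : Lp ℝ 2 (volume : Measure (AddCircle L))) x
      = ∫ x : AddCircle L, f x := by
  have _ : IsFiniteMeasure (volume : Measure (AddCircle L)) := inferInstance
  set c : Lp ℝ 2 (volume : Measure (AddCircle L)) :=
    Lp.const 2 (volume : Measure (AddCircle L)) (1 : ℝ) with hc_def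
  have hc1 : (c : AddCircle L → ℝ) =ᵐ[volume] fun _ => (1 : ℝ) := Lp.coeFn_const 2 (volume : Measure (AddCircle L)) (1 : ℝ)
  -- the constant 1 lies in V
  have hc : c ∈ V := by
    rw [hV]
    intro i
    refine ⟨Polynomial.C 1, ?_, ?_⟩
    · rw [Polynomial.degree_C one_ne_zero]
      exact_mod_cast hM
    · have hnull : (volume : Measure (AddCircle L)) {y | ¬ (c : AddCircle L → ℝ) y = 1} = 0 := by
        simpa [Filter.EventuallyEq, ae_iff] using hc1
      have hR : (volume : Measure ℝ)
          ((fun x : ℝ => (x : AddCircle L)) ⁻¹' {y | ¬ (c : AddCircle L → ℝ) y = 1}) = 0 :=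
        null_preimage_mk hnull
      have hae : ∀ᵐ x : ℝ ∂volume, (c : AddCircle L → ℝ) ((x : ℝ) : AddCircle L) = 1 := by
        rw [ae_iff]
        exact hR
      filter_upwards [ae_restrict_of_ae hae] with x hx
      simpa using hx
  -- pairing against the constant computes the integral
  have key : ∀ h : Lp ℝ 2 (volume : Measure (AddCircle L)), (inner ℝ c h : ℝ) = ∫ x, h x  := by
    intro h
    rw [L2.inner_def]
    refine integral_congr_ae ?_
    filter_upwards [hc1] with x hx
    simp [hx]
  have hPc : V.starProjection c = c :=
    Submodule.starProjection_eq_self_iff.mpr hc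
  have hadj := Submodule.inner_starProjection_left_eq_right V c g
  rw [hPc] at hadj
  have h1 : ∫ x, (Submodule.orthogonalProjectionOnto V g : Lp ℝ 2 (volume : Measure (AddCircle L))) x  = ∫ x, g x  := by
    rw [← key, ← key, hadj]
    rfl
  have h2 : ∫ x, g x  = ∫ x, f x  := by
    rw [integral_congr_ae hg]
    exact integral_sub_right_eq_self (fun x => f x) _
  rw [h1, h2]
end

section
/- Let M ≥ 1 and set K = ⌈M/2⌉. Let s_1 < … < s_K be the roots of the polynomial q_K(x) = (d/dx)^K [(x² − 1)^K] (the K-point Gauss–Legendre nodes). Fix ν ∈ [0,1], a cell width Δx > 0, N ≥ 1 cells I_i = [(i−1)Δx, iΔx] with cell centers x_i, and let g : ℝ → ℝ be NΔx-periodic and on each cell I_i equal to a polynomial p_i of degree ≤ M − 1 in the reference coordinate ξ ∈ [−1,1], where x = x_i + ξΔx/2. Assume that for every i and every ℓ ∈ {1,…,K}, p_i((1−ν)s_ℓ − ν) ≥ 0 and p_i(1 − ν + ν s_ℓ) ≥ 0 (i.e., g is nonnegative at the K-point Gauss–Legendre nodes of each of the two reference subintervals [−1, 1−2ν] and [1−2ν,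 1]). Then for every integer I and every cell i, ∫_{I_i} g(x − (I + ν)Δx) dx ≥ 0; in particular every cell average produced by one shift-and-project step of the semi-Lagrangian DG scheme applied to g is nonnegative, independent of the size of the shift. -/
open MeasureTheory Polynomial


lemma SLDG.nodal_dvd_of_eval_eq_zero {ι : Type*} (v : ι → ℝ) (h : Polynomial ℝ)
    (t : Finset ι) (hinj : Set.InjOn v t) (hz : ∀ i ∈ t, h.eval (v i) = 0) :
    Lagrange.nodal t v ∣ h := by
  classical
  induction t using Finset.induction_on with
  | empty => simpa [Lagrange.nodal_empty] using one_dvd _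
  | @insert i t hit ih =>
    have hinj' : Set.InjOn v t := hinj.mono (by simp [Finset.subset_insert])
    obtain ⟨g, hg⟩ := ih hinj' (fun j hj => hz j (Finset.mem_insert_of_mem hj))
    have hne : (Lagrange.nodal t v).eval (v i) ≠ 0 := by
      apply Lagrange.eval_nodal_not_at_node
      intro j hj hji
      exact hit (by rwa [hinj (Finset.mem_insert_self i t) (Finset.mem_insert_of_mem hj) hji])
    have hgz : g.eval (v i) = 0 := by
      have := hz i (Finset.mem_insert_self _ _)
      rw [hg, eval_mul] at this
      exact (mul_eq_zero.mp this).resolve_left hne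
    obtain ⟨g', hg'⟩ := (dvd_iff_isRoot.mpr hgz : (X - C (v i)) ∣ g)
    exact ⟨g', by rw [Lagrange.nodal_insert_eq_nodal hit, hg, hg', mul_left_comm, mul_assoc]⟩



namespace SLDG

lemma factor_iterate (K m : ℕ) (hm : m ≤ K) :
    ∃ u : Polynomial ℝ, derivative^[m] (((X : Polynomial ℝ)^2 - 1)^K)
      = ((X : Polynomial ℝ)^2 - 1)^(K - m) * u := by
  induction m with
  | zero => exact ⟨1, by simp⟩
  | succ m ih =>
    obtain ⟨u, hu⟩ := ih (by omega)
    set n := K - (m+1) with hn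
    have hKm : K - m = n + 1 := by omega
    refine ⟨C ((n:ℝ)+1) * derivative ((X : Polynomial ℝ)^2-1) * u
      + ((X : Polynomial ℝ)^2-1) * derivative u, ?_⟩
    rw [Function.iterate_succ_apply', hu, hKm, derivative_mul, derivative_pow]
    push_cast
    ring

lemma boundary_vanish (K m : ℕ) (hm : m < K) (x : ℝ) (hx : x^2 = 1) :
    (derivative^[m] (((X : Polynomial ℝ)^2 - 1)^K)).eval x = 0 := by
  obtain ⟨u, hu⟩ := factor_iterate K m hm.le
  have : K - m ≠ 0 := by omega
  simp [hu, eval_pow, hx, this]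

lemma poly_intervalIntegrable (p : Polynomial ℝ) (a b : ℝ) :
    IntervalIntegrable (fun x => p.eval x) volume a b :=
  p.continuous_aeval.intervalIntegrable a b

lemma poly_ftc (f : Polynomial ℝ) (a b : ℝ) :
    ∫ x in a..b, (derivative f).eval x = f.eval b - f.eval a := by
  exact intervalIntegral.integral_eq_sub_of_hasDerivAt (fun x _ => f.hasDerivAt x)
    (poly_intervalIntegrable _ a b)

lemma ibp (Q r : Polynomial ℝ) :
    ∫ x in (-1:ℝ)..1, (derivative Q).eval x * r.eval x
      = Q.eval 1 * r.eval 1 - Q.eval (-1) * r.eval (-1)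
        - ∫ x in (-1:ℝ)..1, Q.eval x * (derivative r).eval x := by
  have h1 := poly_ftc (Q * r) (-1) 1
  rw [derivative_mul] at h1
  have h2 : ∫ x in (-1:ℝ)..1, ((derivative Q * r).eval x + (Q * derivative r).eval x)
      = (∫ x in (-1:ℝ)..1, (derivative Q * r).eval x)
        + ∫ x in (-1:ℝ)..1, (Q * derivative r).eval x :=
    intervalIntegral.integral_add (poly_intervalIntegrable _ _ _) (poly_intervalIntegrable _ _ _)
  simp only [eval_add, eval_mul] at h1 h2 ⊢
  rw [h2] at h1
  linarith

lemma ortho_aux (K : ℕ) : ∀ j ≤ K, ∀ r : Polynomial ℝ,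
    ∫ x in (-1:ℝ)..1, (derivative^[j] (((X : Polynomial ℝ)^2 - 1)^K)).eval x * r.eval x
      = (-1:ℝ)^j * ∫ x in (-1:ℝ)..1,
          ((((X : Polynomial ℝ)^2 - 1)^K)).eval x * (derivative^[j] r).eval x := by
  intro j
  induction j with
  | zero => intro _ r; simp
  | succ j ih =>
    intro hj r
    rw [Function.iterate_succ_apply', ibp (derivative^[j] (((X : Polynomial ℝ)^2 - 1)^K)) r,
      boundary_vanish K j (by omega) 1 (by norm_num),
      boundary_vanish K j (by omega) (-1) (by norm_num),
      ih (by omega) (derivative r), ← Function.iterate_succ_apply]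
    ring

lemma ortho (K : ℕ) (r : Polynomial ℝ) (hr : r.natDegree < K) :
    ∫ x in (-1:ℝ)..1,
      (derivative^[K] (((X : Polynomial ℝ)^2 - 1)^K)).eval x * r.eval x = 0 := by
  rw [ortho_aux K K le_rfl r, iterate_derivative_eq_zero hr]
  simp

lemma iterate_deg (K : ℕ) : ∀ m ≤ K,
    (derivative^[m] (((X : Polynomial ℝ)^2 - 1)^K)).natDegree = 2*K - m ∧
    (derivative^[m] (((X : Polynomial ℝ)^2 - 1)^K)) ≠ 0 := by
  have hb : ((X : Polynomial ℝ)^2 - 1) = X^2 - C 1 := by simp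
  have hm1 : ((X : Polynomial ℝ)^2 - 1).Monic := by
    rw [hb]; exact monic_X_pow_sub_C 1 two_ne_zero
  have hmonic : (((X : Polynomial ℝ)^2 - 1)^K).Monic := hm1.pow K
  have hdeg0 : (((X : Polynomial ℝ)^2 - 1)^K).natDegree = 2*K := by
    rw [hm1.natDegree_pow, hb, natDegree_X_pow_sub_C]; ring
  intro m
  induction m with
  | zero =>
    intro _
    refine ⟨by simpa using hdeg0, hmonic.ne_zero⟩
  | succ m ih =>
    intro hm
    obtain ⟨hd, hne⟩ := ih (by omega)
    have hpos : 0 < (derivative^[m] (((X : Polynomial ℝ)^2 - 1)^K)).natDegree := by omega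
    have hdd := degree_derivative_eq _ hpos
    rw [Function.iterate_succ_apply']
    constructor
    · have := natDegree_eq_of_degree_eq_some hdd
      omega
    · intro h0
      rw [h0] at hdd
      simp at hdd

end SLDG

namespace SLDG

noncomputable def W (K : ℕ) (s : Fin K → ℝ) (ℓ : Fin K) : ℝ :=
  ∫ x in (-1:ℝ)..1, (Lagrange.basis Finset.univ s ℓ).eval x

section
variable (K : ℕ) (hK1 : 1 ≤ K) (s : Fin K → ℝ) (hinj : Function.Injective s)
  (hroot : ∀ ℓ, (derivative^[K] (((X : Polynomial ℝ)^2 - 1)^K)).eval (s ℓ) = 0)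

include hK1 hinj hroot

lemma ortho_nodal (h : Polynomial ℝ) (hh : h.natDegree < K) :
    ∫ x in (-1:ℝ)..1, (Lagrange.nodal Finset.univ s).eval x * h.eval x = 0 := by
  set q := derivative^[K] (((X : Polynomial ℝ)^2 - 1)^K) with hq
  obtain ⟨hdq, hqne⟩ := iterate_deg K K le_rfl
  have hdq' : q.natDegree = K := by rw [hdq]; omega
  set w := Lagrange.nodal Finset.univ s with hw
  have hwdeg : w.natDegree = K := by
    rw [hw, Lagrange.natDegree_nodal]; simp
  have hcw : q = C q.leadingCoeff * w := by
    by_cases hdiff : q - C q.leadingCoeff * w = 0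
    · linear_combination (norm := ring_nf) hdiff
    have hmw : w.Monic := Lagrange.nodal_monic
    have hlcw : (C q.leadingCoeff * w).leadingCoeff = q.leadingCoeff := by
      rw [leadingCoeff_mul, hmw.leadingCoeff, leadingCoeff_C, mul_one]
    have hlcne : q.leadingCoeff ≠ 0 := leadingCoeff_ne_zero.mpr hqne
    have hdegeq : q.degree = (C q.leadingCoeff * w).degree := by
      rw [degree_mul, degree_C hlcne, zero_add, degree_eq_natDegree hqne,
        degree_eq_natDegree hmw.ne_zero, hdq', hwdeg]
    have hlt := degree_sub_lt hdegeq hqne hlcw.symm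
    have hnatlt : (q - C q.leadingCoeff * w).natDegree < K := by
      have h2 : (q - C q.leadingCoeff * w).degree < ((K : ℕ) : WithBot ℕ) := by
        rw [← hdq', ← degree_eq_natDegree hqne]; exact hlt
      exact (natDegree_lt_iff_degree_lt hdiff).mpr h2
    have hzero : q - C q.leadingCoeff * w = 0 := by
      apply Polynomial.eq_zero_of_natDegree_lt_card_of_eval_eq_zero _ hinj
      · intro ℓ
        simp [eval_sub, eval_mul, hroot ℓ, hw, Lagrange.eval_nodal_at_node (Finset.mem_univ ℓ)]
      · simpa using hnatlt
    exact absurd hzero hdiff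
  -- now: ∫ w h = lc⁻¹ ∫ q h = 0
  have hlcne : q.leadingCoeff ≠ 0 := leadingCoeff_ne_zero.mpr hqne
  have hqe : ∀ x : ℝ, q.eval x = q.leadingCoeff * w.eval x := by
    intro x
    have := congrArg (eval x) hcw
    simpa using this
  have : ∀ x : ℝ, w.eval x * h.eval x = q.leadingCoeff⁻¹ * (q.eval x * h.eval x) := by
    intro x; rw [hqe x]; field_simp
  rw [intervalIntegral.integral_congr (fun x _ => this x),
    intervalIntegral.integral_const_mul, ortho K h hh, mul_zero]

theorem quad_exact (f : Polynomial ℝ) (hf : f.natDegree ≤ 2*K - 1) :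
    ∫ x in (-1:ℝ)..1, f.eval x = ∑ ℓ, W K s ℓ * f.eval (s ℓ) := by
  classical
  have hinjOn : Set.InjOn s (Finset.univ : Finset (Fin K)) := hinj.injOn
  set r := Lagrange.interpolate Finset.univ s (fun ℓ => f.eval (s ℓ)) with hr
  have hrdeg : r.degree < K := by
    have := Lagrange.degree_interpolate_lt (fun ℓ => f.eval (s ℓ)) hinjOn
    rw [Finset.card_univ, Fintype.card_fin] at this
    exact this
  have hrnat : r.natDegree < K := by
    by_cases h0 : r = 0
    · rw [h0, natDegree_zero]; exact hK1
    · exact (natDegree_lt_iff_degree_lt h0).mpr (by simpa using hrdeg)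
  have hvals : ∀ ℓ : Fin K, (f - r).eval (s ℓ) = 0 := by
    intro ℓ
    rw [eval_sub, hr, Lagrange.eval_interpolate_at_node _ hinjOn (Finset.mem_univ ℓ), sub_self]
  obtain ⟨g, hg⟩ := nodal_dvd_of_eval_eq_zero s (f - r) Finset.univ hinjOn
    (fun ℓ _ => hvals ℓ)
  have hgdeg : g.natDegree < K := by
    by_cases h0 : g = 0
    · rw [h0, natDegree_zero]; exact hK1
    have hmw : (Lagrange.nodal Finset.univ s).Monic := Lagrange.nodal_monic
    have : (f - r).natDegree = K + g.natDegree := by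
      rw [hg, natDegree_mul hmw.ne_zero h0]
      congr 1
      rw [Lagrange.natDegree_nodal]; simp
    have hfr : (f - r).natDegree ≤ 2*K - 1 :=
      le_trans (natDegree_sub_le f r) (by omega)
    omega
  have hsplit : (∫ x in (-1:ℝ)..1, f.eval x) = (∫ x in (-1:ℝ)..1, (f - r).eval x)
      + ∫ x in (-1:ℝ)..1, r.eval x := by
    rw [← intervalIntegral.integral_add (poly_intervalIntegrable _ _ _)
      (poly_intervalIntegrable _ _ _)]
    apply intervalIntegral.integral_congr
    intro x _
    simp [eval_sub]
  have hzero : (∫ x in (-1:ℝ)..1, (f - r).eval x) = 0 := by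
    have := ortho_nodal K hK1 s hinj hroot g hgdeg
    rw [← this]
    apply intervalIntegral.integral_congr
    intro x _
    simp only [hg, eval_mul]
  have hrint : (∫ x in (-1:ℝ)..1, r.eval x) = ∑ ℓ, W K s ℓ * f.eval (s ℓ) := by
    rw [hr, Lagrange.interpolate_apply]
    have : ∀ x : ℝ, (∑ ℓ, C (f.eval (s ℓ)) * Lagrange.basis Finset.univ s ℓ).eval x
        = ∑ ℓ, f.eval (s ℓ) * (Lagrange.basis Finset.univ s ℓ).eval x := by
      intro x; rw [eval_finset_sum]; simp [eval_mul]
    rw [intervalIntegral.integral_congr (fun x _ => this x),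
      intervalIntegral.integral_finset_sum
        (fun ℓ _ => ((poly_intervalIntegrable _ _ _).const_mul _))]
    congr 1
    ext ℓ
    rw [intervalIntegral.integral_const_mul, W]
    ring
  rw [hsplit, hzero, zero_add, hrint]

theorem W_nonneg (ℓ : Fin K) : 0 ≤ W K s ℓ := by
  classical
  have hinjOn : Set.InjOn s (Finset.univ : Finset (Fin K)) := hinj.injOn
  have hbd : (Lagrange.basis Finset.univ s ℓ).natDegree = K - 1 := by
    rw [Lagrange.natDegree_basis hinjOn (Finset.mem_univ ℓ)]; simp
  have hsq : ((Lagrange.basis Finset.univ s ℓ)^2).natDegree ≤ 2*K - 1 := by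
    rw [natDegree_pow, hbd]; omega
  have hq := quad_exact K hK1 s hinj hroot ((Lagrange.basis Finset.univ s ℓ)^2) hsq
  have hsum : ∑ m, W K s m * ((Lagrange.basis Finset.univ s ℓ)^2).eval (s m) = W K s ℓ := by
    rw [Finset.sum_eq_single ℓ]
    · rw [eval_pow, Lagrange.eval_basis_self hinjOn (Finset.mem_univ ℓ)]; ring
    · intro m _ hm
      rw [eval_pow, Lagrange.eval_basis_of_ne (Ne.symm hm) (Finset.mem_univ m)]
      ring
    · intro h; exact absurd (Finset.mem_univ ℓ) h
  rw [← hsum, ← hq]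
  apply intervalIntegral.integral_nonneg (by norm_num)
  intro x _
  rw [eval_pow]
  positivity

theorem affine_nonneg (c d : ℝ) (f : Polynomial ℝ) (hf : f.natDegree ≤ 2*K - 1)
    (hvals : ∀ ℓ, 0 ≤ f.eval (c * s ℓ + d)) :
    0 ≤ ∫ t in (-1:ℝ)..1, f.eval (c * t + d) := by
  set fc := f.comp (C c * X + C d) with hfc
  have hdeg : fc.natDegree ≤ 2*K - 1 := by
    refine le_trans (natDegree_comp_le) ?_
    calc f.natDegree * (C c * X + C d).natDegree ≤ f.natDegree * 1 := by
          apply Nat.mul_le_mul_left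
          apply natDegree_add_le_of_degree_le
          · exact le_trans (natDegree_C_mul_le _ _) (by simp)
          · simp
      _ ≤ 2*K - 1 := by omega
  have heval : ∀ x : ℝ, fc.eval x = f.eval (c * x + d) := by
    intro x; rw [hfc, eval_comp]; simp
  have h1 : (∫ t in (-1:ℝ)..1, f.eval (c * t + d)) = ∫ t in (-1:ℝ)..1, fc.eval t := by
    apply intervalIntegral.integral_congr
    intro x _; exact (heval x).symm
  rw [h1, quad_exact K hK1 s hinj hroot fc hdeg]
  apply Finset.sum_nonneg
  intro ℓ _
  rw [heval]
  exact mul_nonneg (W_nonneg K hK1 s hinj hroot ℓ) (hvals ℓ)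

end
end SLDG

namespace SLDG

lemma cellEq (Δx : ℝ) (hΔx : 0 < Δx) (N : ℕ) (g : ℝ → ℝ) (p : Fin N → Polynomial ℝ)
    (hcell : ∀ i : Fin N, ∀ ξ ∈ Set.Icc (-1 : ℝ) 1,
      g (((i : ℕ) + 1 / 2) * Δx + ξ * Δx / 2) = (p i).eval ξ)
    (j : Fin N) (x : ℝ)
    (hx : x ∈ Set.Icc (((j:ℕ):ℝ)*Δx) ((((j:ℕ):ℝ)+1)*Δx)) :
    g x = (p j).eval (2/Δx * x - (2*((j:ℕ):ℝ)+1)) := by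
  obtain ⟨h1, h2⟩ := hx
  set ξ := 2/Δx * x - (2*((j:ℕ):ℝ)+1) with hξ
  have hb1 : 2*((j:ℕ):ℝ) ≤ 2/Δx * x := by
    rw [div_mul_eq_mul_div, le_div_iff₀ hΔx]; nlinarith
  have hb2 : 2/Δx * x ≤ 2*((j:ℕ):ℝ) + 2 := by
    rw [div_mul_eq_mul_div, div_le_iff₀ hΔx]; nlinarith
  have hξmem : ξ ∈ Set.Icc (-1:ℝ) 1 := ⟨by rw [hξ]; linarith, by rw [hξ]; linarith⟩
  rw [← hcell j ξ hξmem]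
  congr 1
  rw [hξ]
  field_simp
  ring

lemma cellIntegrable (Δx : ℝ) (hΔx : 0 < Δx) (N : ℕ) (g : ℝ → ℝ) (p : Fin N → Polynomial ℝ)
    (hcell : ∀ i : Fin N, ∀ ξ ∈ Set.Icc (-1 : ℝ) 1,
      g (((i : ℕ) + 1 / 2) * Δx + ξ * Δx / 2) = (p i).eval ξ)
    (j : Fin N) (a b : ℝ)
    (ha : a ∈ Set.Icc (((j:ℕ):ℝ)*Δx) ((((j:ℕ):ℝ)+1)*Δx))
    (hb : b ∈ Set.Icc (((j:ℕ):ℝ)*Δx) ((((j:ℕ):ℝ)+1)*Δx)) :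
    IntervalIntegrable g volume a b := by
  have cont : Continuous fun x => (p j).eval (2/Δx * x - (2*((j:ℕ):ℝ)+1)) := by
    apply (p j).continuous_aeval.comp
    continuity
  have hsub : Set.uIoc a b ⊆ Set.Icc (((j:ℕ):ℝ)*Δx) ((((j:ℕ):ℝ)+1)*Δx) :=
    Set.uIoc_subset_uIcc.trans (Set.uIcc_subset_Icc ha hb)
  have hInt : IntervalIntegrable _ volume a b := cont.intervalIntegrable a b
  rw [intervalIntegrable_iff] at hInt ⊢
  apply hInt.congr
  apply (ae_restrict_iff' measurableSet_uIoc).mpr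
  filter_upwards with x
  intro hx
  exact (cellEq Δx hΔx N g p hcell j x (hsub hx)).symm

lemma cellVal (Δx : ℝ) (hΔx : 0 < Δx) (N : ℕ) (g : ℝ → ℝ) (p : Fin N → Polynomial ℝ)
    (hcell : ∀ i : Fin N, ∀ ξ ∈ Set.Icc (-1 : ℝ) 1,
      g (((i : ℕ) + 1 / 2) * Δx + ξ * Δx / 2) = (p i).eval ξ)
    (j : Fin N) (ξa ξb : ℝ) (hξa : ξa ∈ Set.Icc (-1:ℝ) 1) (hξb : ξb ∈ Set.Icc (-1:ℝ) 1) :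
    ∫ x in ((((j:ℕ):ℝ) + (1+ξa)/2)*Δx)..((((j:ℕ):ℝ) + (1+ξb)/2)*Δx), g x
      = (Δx/2) * ∫ ξ in ξa..ξb, (p j).eval ξ := by
  set a := (((j:ℕ):ℝ) + (1+ξa)/2)*Δx with hadef
  set b := (((j:ℕ):ℝ) + (1+ξb)/2)*Δx with hbdef
  have ha : a ∈ Set.Icc (((j:ℕ):ℝ)*Δx) ((((j:ℕ):ℝ)+1)*Δx) := by
    constructor <;> [nlinarith [hξa.1]; nlinarith [hξa.2]]
  have hb : b ∈ Set.Icc (((j:ℕ):ℝ)*Δx) ((((j:ℕ):ℝ)+1)*Δx) := by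
    constructor <;> [nlinarith [hξb.1]; nlinarith [hξb.2]]
  have hsub : Set.uIcc a b ⊆ Set.Icc (((j:ℕ):ℝ)*Δx) ((((j:ℕ):ℝ)+1)*Δx) :=
    Set.uIcc_subset_Icc ha hb
  have step1 : (∫ x in a..b, g x)
      = ∫ x in a..b, (p j).eval ((2/Δx) * x + (-(2*((j:ℕ):ℝ)+1))) := by
    apply intervalIntegral.integral_congr
    intro x hx
    rw [cellEq Δx hΔx N g p hcell j x (hsub hx)]
    ring_nf
  have hc : (2/Δx) ≠ 0 := by positivity
  have step2 := intervalIntegral.integral_comp_mul_add (a := a) (b := b)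
    (fun x => (p j).eval x) hc (-(2*((j:ℕ):ℝ)+1))
  have ea : (2/Δx) * a + (-(2*((j:ℕ):ℝ)+1)) = ξa := by rw [hadef]; field_simp; ring
  have eb : (2/Δx) * b + (-(2*((j:ℕ):ℝ)+1)) = ξb := by rw [hbdef]; field_simp; ring
  rw [ea, eb] at step2
  rw [step1, step2, smul_eq_mul, inv_div]

end SLDG

set_option maxHeartbeats 2000000 in
open SLDG in
/-- Positivity in the mean for the shift-and-project semi-Lagrangian DG step:
if the broken piecewise polynomial (degree `≤ M-1`) periodic function `g` is nonnegative
at the `K = ⌈M/2⌉` Gauss–Legendre nodes of each of the two reference subintervals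
`[-1, 1-2ν]` and `[1-2ν, 1]` of every cell, then every cell average of the shifted
function is nonnegative, independent of the size of the shift. -/
theorem shift_project_positivity_in_mean (M K : ℕ) (hM : 1 ≤ M) (hK : K = (M + 1) / 2)
    (s : Fin K → ℝ) (hs : StrictMono s)
    (hroot : ∀ ℓ : Fin K,
      (Polynomial.derivative^[K] (((Polynomial.X : Polynomial ℝ) ^ 2 - 1) ^ K)).IsRoot (s ℓ))
    (ν : ℝ) (hν : ν ∈ Set.Icc (0 : ℝ) 1)
    (Δx : ℝ) (hΔx : 0 < Δx) (N : ℕ) (hN : 1 ≤ N)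
    (g : ℝ → ℝ) (hper : Function.Periodic g ((N : ℝ) * Δx))
    (p : Fin N → Polynomial ℝ)
    (hdeg : ∀ i : Fin N, (p i).natDegree ≤ M - 1)
    (hcell : ∀ i : Fin N, ∀ ξ ∈ Set.Icc (-1 : ℝ) 1,
      g (((i : ℕ) + 1 / 2) * Δx + ξ * Δx / 2) = (p i).eval ξ)
    (hposL : ∀ i : Fin N, ∀ ℓ : Fin K, 0 ≤ (p i).eval ((1 - ν) * s ℓ - ν))
    (hposR : ∀ i : Fin N, ∀ ℓ : Fin K, 0 ≤ (p i).eval (1 - ν + ν * s ℓ)) :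
    ∀ (I : ℤ) (i : Fin N),
      0 ≤ ∫ x in ((i : ℕ) * Δx)..(((i : ℕ) + 1) * Δx), g (x - ((I : ℝ) + ν) * Δx) := by
  intro I i
  have hK1 : 1 ≤ K := by omega
  have h2K : M - 1 ≤ 2*K - 1 := by omega
  have hinj : Function.Injective s := hs.injective
  have hroot' : ∀ ℓ, (derivative^[K] (((X : Polynomial ℝ)^2 - 1)^K)).eval (s ℓ) = 0 :=
    fun ℓ => hroot ℓ
  obtain ⟨hν0, hν1⟩ := hν
  -- the two reference subinterval integrals are nonnegative
  have subL : ∀ j : Fin N, 0 ≤ ∫ ξ in (-1:ℝ)..(1-2*ν), (p j).eval ξ := by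
    intro j
    have h : (1-ν) • (∫ t in (-1:ℝ)..1, (p j).eval ((1-ν) * t + (-ν)))
        = ∫ ξ in ((1-ν)*(-1)+(-ν))..((1-ν)*1+(-ν)), (p j).eval ξ := by
      exact intervalIntegral.smul_integral_comp_mul_add (fun y => (p j).eval y) (1-ν) (-ν)
    have e1 : (1-ν)*(-1)+(-ν) = -1 := by ring
    have e2 : (1-ν)*1+(-ν) = 1-2*ν := by ring
    rw [e1, e2] at h
    rw [← h, smul_eq_mul]
    refine mul_nonneg (by linarith) ?_
    apply affine_nonneg K hK1 s hinj hroot' (1-ν) (-ν) (p j) (le_trans (hdeg j) h2K)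
    intro ℓ
    rw [show (1-ν) * s ℓ + (-ν) = (1-ν) * s ℓ - ν from by ring]
    exact hposL j ℓ
  have subR : ∀ j : Fin N, 0 ≤ ∫ ξ in (1-2*ν)..(1:ℝ), (p j).eval ξ := by
    intro j
    have h : ν • (∫ t in (-1:ℝ)..1, (p j).eval (ν * t + (1-ν)))
        = ∫ ξ in (ν*(-1)+(1-ν))..(ν*1+(1-ν)), (p j).eval ξ := by
      exact intervalIntegral.smul_integral_comp_mul_add (fun y => (p j).eval y) ν (1-ν)
    have e1 : ν*(-1)+(1-ν) = 1-2*ν := by ring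
    have e2 : ν*1+(1-ν) = 1 := by ring
    rw [e1, e2] at h
    rw [← h, smul_eq_mul]
    refine mul_nonneg hν0 ?_
    apply affine_nonneg K hK1 s hinj hroot' ν (1-ν) (p j) (le_trans (hdeg j) h2K)
    intro ℓ
    rw [show ν * s ℓ + (1-ν) = 1 - ν + ν * s ℓ from by ring]
    exact hposR j ℓ
  -- shift the integral
  rw [intervalIntegral.integral_comp_sub_right]
  -- periodic shifting
  have hN0 : (0:ℤ) < (N:ℤ) := by exact_mod_cast hN
  have shift : ∀ (m : ℤ) (a b : ℝ),
      (∫ x in (a + (m:ℝ)*((N:ℝ)*Δx))..(b + (m:ℝ)*((N:ℝ)*Δx)), g x) = ∫ x in a..b, g x := by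
    intro m a b
    rw [← intervalIntegral.integral_comp_add_right g ((m:ℝ)*((N:ℝ)*Δx))]
    exact intervalIntegral.integral_congr fun x _ => (hper.int_mul m) x
  have shiftInt : ∀ (m : ℤ) (a b : ℝ), IntervalIntegrable g volume a b →
      IntervalIntegrable g volume (a + (m:ℝ)*((N:ℝ)*Δx)) (b + (m:ℝ)*((N:ℝ)*Δx)) := by
    intro m a b h
    have h2 := h.comp_add_right (-((m:ℝ)*((N:ℝ)*Δx)))
    have hfe : (fun x => g (x + -((m:ℝ)*((N:ℝ)*Δx)))) = g := by
      funext x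
      have := (hper.int_mul (-m)) x
      push_cast at this
      rw [← this]
      ring_nf
    rw [hfe] at h2
    simpa using h2
  set t : ℤ := (i:ℤ) - I with ht
  -- decompositions
  set r2 : ℤ := t % (N:ℤ) with hr2
  have hr2a : 0 ≤ r2 := Int.emod_nonneg _ (by omega)
  have hr2b : r2 < N := Int.emod_lt_of_pos _ hN0
  set j2 : Fin N := ⟨r2.toNat, by omega⟩ with hj2
  set q2 : ℤ := t / (N:ℤ) with hq2
  have hdm2 : (N:ℤ) * q2 + r2 = t := Int.mul_ediv_add_emod t N
  have hj2r : ((j2:ℕ):ℝ) = (r2:ℝ) := by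
    have h' : (r2.toNat : ℤ) = r2 := Int.toNat_of_nonneg hr2a
    show ((r2.toNat : ℕ) : ℝ) = (r2:ℝ)
    exact_mod_cast h'
  set r1 : ℤ := (t-1) % (N:ℤ) with hr1
  have hr1a : 0 ≤ r1 := Int.emod_nonneg _ (by omega)
  have hr1b : r1 < N := Int.emod_lt_of_pos _ hN0
  set j1 : Fin N := ⟨r1.toNat, by omega⟩ with hj1
  set q1 : ℤ := (t-1) / (N:ℤ) with hq1
  have hdm1 : (N:ℤ) * q1 + r1 = t - 1 := Int.mul_ediv_add_emod (t-1) N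
  have hj1r : ((j1:ℕ):ℝ) = (r1:ℝ) := by
    have h' : (r1.toNat : ℤ) = r1 := Int.toNat_of_nonneg hr1a
    show ((r1.toNat : ℕ) : ℝ) = (r1:ℝ)
    exact_mod_cast h'
  -- cast identities
  have hti : ((t:ℝ)) = ((i:ℕ):ℝ) - (I:ℝ) := by rw [ht]; push_cast; ring
  have hc1 : ((t:ℝ)) - 1 = (q1:ℝ)*(N:ℝ) + ((j1:ℕ):ℝ) := by
    have h := congrArg (Int.cast : ℤ → ℝ) hdm1
    push_cast at h
    rw [hj1r]; linarith
  have hc2 : ((t:ℝ)) = (q2:ℝ)*(N:ℝ) + ((j2:ℕ):ℝ) := by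
    have h := congrArg (Int.cast : ℤ → ℝ) hdm2
    push_cast at h
    rw [hj2r]; linarith
  -- endpoint identities
  have e1 : ((i:ℕ):ℝ)*Δx - ((I:ℝ)+ν)*Δx
      = (((j1:ℕ):ℝ) + (1+(1-2*ν))/2)*Δx + (q1:ℝ)*((N:ℝ)*Δx) := by
    linear_combination Δx * hc1 - Δx * hti
  have e2 : ((t:ℝ))*Δx = (((j1:ℕ):ℝ) + (1+(1:ℝ))/2)*Δx + (q1:ℝ)*((N:ℝ)*Δx) := by
    linear_combination Δx * hc1
  have e3 : ((t:ℝ))*Δx = (((j2:ℕ):ℝ) + (1+(-1:ℝ))/2)*Δx + (q2:ℝ)*((N:ℝ)*Δx) := by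
    linear_combination Δx * hc2
  have e4 : (((i:ℕ):ℝ)+1)*Δx - ((I:ℝ)+ν)*Δx
      = (((j2:ℕ):ℝ) + (1+(1-2*ν))/2)*Δx + (q2:ℝ)*((N:ℝ)*Δx) := by
    linear_combination Δx * hc2 - Δx * hti
  -- memberships
  have mem : ∀ (j : Fin N) (ξ : ℝ), ξ ∈ Set.Icc (-1:ℝ) 1 →
      (((j:ℕ):ℝ) + (1+ξ)/2)*Δx ∈ Set.Icc (((j:ℕ):ℝ)*Δx) ((((j:ℕ):ℝ)+1)*Δx) := by
    intro j ξ hξ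
    obtain ⟨h1a, h1b⟩ := hξ
    constructor <;> nlinarith
  have hmL : (1-2*ν) ∈ Set.Icc (-1:ℝ) 1 := ⟨by linarith, by linarith⟩
  have hm1 : (1:ℝ) ∈ Set.Icc (-1:ℝ) 1 := ⟨by norm_num, le_refl 1⟩
  have hmm1 : (-1:ℝ) ∈ Set.Icc (-1:ℝ) 1 := ⟨le_refl _, by norm_num⟩
  -- integrability of the two pieces
  have intL : IntervalIntegrable g volume
      ((((j1:ℕ):ℝ) + (1+(1-2*ν))/2)*Δx + (q1:ℝ)*((N:ℝ)*Δx)) (((t:ℝ))*Δx) := by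
    rw [e2]
    exact shiftInt q1 _ _ (cellIntegrable Δx hΔx N g p hcell j1 _ _
      (mem j1 _ hmL) (mem j1 _ hm1))
  have intR : IntervalIntegrable g volume (((t:ℝ))*Δx)
      ((((j2:ℕ):ℝ) + (1+(1-2*ν))/2)*Δx + (q2:ℝ)*((N:ℝ)*Δx)) := by
    rw [e3]
    exact shiftInt q2 _ _ (cellIntegrable Δx hΔx N g p hcell j2 _ _
      (mem j2 _ hmm1) (mem j2 _ hmL))
  rw [e1, e4, ← intervalIntegral.integral_add_adjacent_intervals intL intR]
  apply add_nonneg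
  · rw [e2, shift q1, cellVal Δx hΔx N g p hcell j1 (1-2*ν) 1 hmL hm1]
    exact mul_nonneg (by positivity) (subR j1)
  · rw [e3, shift q2, cellVal Δx hΔx N g p hcell j2 (-1) (1-2*ν) hmm1 hmL]
    exact mul_nonneg (by positivity) (subL j2)
end

section
/- Let K ≥ 1 and let s_1 < … < s_K be the roots of the polynomial q_K(x) = (d/dx)^K [(x² − 1)^K]. If p is a real polynomial with deg p ≤ 2K − 1 and p(s_ℓ) ≥ 0 for every ℓ ∈ {1,…,K}, then ∫_{−1}^{1} p(x) dx ≥ 0. -/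
open Polynomial intervalIntegral MeasureTheory

namespace GaussLegendreAux

lemma intg (p : ℝ[X]) (a b : ℝ) :
    IntervalIntegrable (fun x => p.eval x) volume a b :=
  (p.continuous).intervalIntegrable a b

/-- integration by parts for polynomials on [-1,1] -/
lemma parts (v g : ℝ[X]) :
    (∫ x in (-1:ℝ)..1, (derivative v).eval x * g.eval x)
      + ∫ x in (-1:ℝ)..1, v.eval x * (derivative g).eval x
    = (v*g).eval 1 - (v*g).eval (-1) := by
  have key : (∫ x in (-1:ℝ)..1, (derivative (v*g)).eval x)
      = (v*g).eval 1 - (v*g).eval (-1) :=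
    integral_eq_sub_of_hasDerivAt (fun x _ => Polynomial.hasDerivAt (v*g) x)
      (intg _ _ _)
  calc (∫ x in (-1:ℝ)..1, (derivative v).eval x * g.eval x)
      + ∫ x in (-1:ℝ)..1, v.eval x * (derivative g).eval x
      = ∫ x in (-1:ℝ)..1, ((derivative v * g).eval x + (v * derivative g).eval x) := by
        rw [intervalIntegral.integral_add (intg _ _ _) (intg _ _ _)]
        simp [eval_mul]
    _ = ∫ x in (-1:ℝ)..1, (derivative (v*g)).eval x := by
        congr 1; funext x; rw [derivative_mul, eval_add]
    _ = _ := key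

lemma deriv_dvd {a : ℝ} {n : ℕ} {p : ℝ[X]} (h : (X - C a)^(n+1) ∣ p) :
    (X - C a)^n ∣ derivative p := by
  obtain ⟨w, rfl⟩ := h
  rw [derivative_mul, derivative_pow, derivative_sub, derivative_X, derivative_C]
  refine dvd_add (Dvd.dvd.mul_right (Dvd.dvd.mul_right ?_ _) _) (Dvd.dvd.mul_right (pow_dvd_pow _ (Nat.le_succ n)) _)
  exact Dvd.intro_left _ rfl

lemma iter_dvd {a : ℝ} {K : ℕ} {u : ℝ[X]} (hu : (X - C a)^K ∣ u) :
    ∀ j, j ≤ K → (X - C a)^(K - j) ∣ derivative^[j] u := by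
  intro j
  induction j with
  | zero => simpa using hu
  | succ n ih =>
      intro hn
      rw [Function.iterate_succ_apply']
      have h1 : (X - C a)^(K - (n+1) + 1) ∣ derivative^[n] u := by
        have := ih (Nat.le_of_succ_le hn)
        have heq : K - n = K - (n+1) + 1 := by omega
        rwa [heq] at this
      exact deriv_dvd h1

end GaussLegendreAux

namespace GaussLegendreAux

lemma natDegree_iter_u (K : ℕ) : ∀ j, j ≤ 2*K →
    (derivative^[j] (((X:ℝ[X])^2-1)^K)).natDegree = 2*K - j := by
  have h2 : (((X:ℝ[X])^2-1)).natDegree = 2 := by compute_degree!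
  have hu : ((((X:ℝ[X])^2-1))^K).natDegree = 2*K := by
    rw [natDegree_pow, h2, mul_comm]
  intro j
  induction j with
  | zero => simpa using hu
  | succ n ih =>
      intro hn
      rw [Function.iterate_succ_apply']
      have hpos : 0 < (derivative^[n] (((X:ℝ[X])^2-1)^K)).natDegree := by
        rw [ih (Nat.le_of_succ_le hn)]; omega
      have := degree_derivative_eq _ hpos
      rw [ih (Nat.le_of_succ_le hn)] at this
      have := natDegree_eq_of_degree_eq_some this
      rw [this]; omega

lemma factor : (((X:ℝ[X])^2-1)) = (X - C 1) * (X - C (-1)) := by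
  simp only [map_one, map_neg]
  ring

lemma vanish {K j : ℕ} (hj : j < K) {a : ℝ} (ha : a = 1 ∨ a = -1) :
    (derivative^[j] (((X:ℝ[X])^2-1)^K)).eval a = 0 := by
  have hdvd : ((X:ℝ[X]) - C a)^K ∣ (((X:ℝ[X])^2-1)^K) := by
    rw [factor, mul_pow]
    rcases ha with rfl | rfl
    · exact dvd_mul_right _ _
    · exact dvd_mul_left _ _
  have h1 := iter_dvd hdvd j (le_of_lt hj)
  have h2 : ((X:ℝ[X]) - C a) ∣ derivative^[j] (((X:ℝ[X])^2-1)^K) :=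
    dvd_trans (dvd_pow_self _ (by omega)) h1
  exact (dvd_iff_isRoot.mp h2)

lemma ortho (K : ℕ) (g : ℝ[X]) (hg : g.natDegree < K) :
    ∫ x in (-1:ℝ)..1, (derivative^[K] (((X:ℝ[X])^2-1)^K)).eval x * g.eval x = 0 := by
  set u : ℝ[X] := ((X:ℝ[X])^2-1)^K with hu
  have main : ∀ j, j ≤ K → ∀ g : ℝ[X],
      (∫ x in (-1:ℝ)..1, (derivative^[K] u).eval x * g.eval x)
        = (-1:ℝ)^j * ∫ x in (-1:ℝ)..1,
            (derivative^[K-j] u).eval x * (derivative^[j] g).eval x := by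
    intro j
    induction j with
    | zero => intro _ g; simp
    | succ n ih =>
        intro hn g
        rw [ih (Nat.le_of_succ_le hn) g]
        set v : ℝ[X] := derivative^[K-(n+1)] u with hv
        set h : ℝ[X] := derivative^[n] g with hh
        have hparts := parts v h
        have hlt : K - (n+1) < K := by omega
        have hb1 : (v*h).eval 1 = 0 := by
          rw [eval_mul, vanish hlt (Or.inl rfl), zero_mul]
        have hb2 : (v*h).eval (-1) = 0 := by
          rw [eval_mul, vanish hlt (Or.inr rfl), zero_mul]
        have hdv : derivative v = derivative^[K-n] u := by
          rw [hv, show K - n = (K-(n+1))+1 by omega]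
          exact (Function.iterate_succ_apply' _ _ _).symm
        rw [hb1, hb2, sub_zero, hdv] at hparts
        have hdh : derivative h = derivative^[n+1] g := by
          rw [hh]
          exact (Function.iterate_succ_apply' _ _ _).symm
        rw [hdh] at hparts
        have hA : (∫ x in (-1:ℝ)..1, (derivative^[K-n] u).eval x * h.eval x)
            = - ∫ x in (-1:ℝ)..1, v.eval x * (derivative^[n+1] g).eval x := by
          linarith [hparts]
        rw [hh] at hA
        rw [hA, pow_succ]
        ring
  have hK : derivative^[K] g = 0 := iterate_derivative_eq_zero hg
  rw [main K le_rfl g, hK]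
  simp

end GaussLegendreAux


set_option maxHeartbeats 1000000

/-- Positivity of Gauss–Legendre quadrature: a real polynomial of degree `≤ 2K - 1`
that is nonnegative at the `K` Gauss–Legendre nodes has nonnegative integral over
`[-1, 1]`. -/
theorem gauss_legendre_positivity (K : ℕ) (hK : 1 ≤ K)
    (s : Fin K → ℝ) (hs : StrictMono s)
    (hroot : ∀ ℓ : Fin K,
      (Polynomial.derivative^[K] (((Polynomial.X : Polynomial ℝ) ^ 2 - 1) ^ K)).IsRoot (s ℓ))
    (p : Polynomial ℝ) (hdeg : p.natDegree ≤ 2 * K - 1)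
    (hpos : ∀ ℓ : Fin K, 0 ≤ p.eval (s ℓ)) :
    0 ≤ ∫ x in (-1 : ℝ)..1, p.eval x := by
  classical
  set q : ℝ[X] := derivative^[K] (((X : ℝ[X]) ^ 2 - 1) ^ K) with hqdef
  have hinj : Function.Injective s := hs.injective
  have hq : q.natDegree = K := by
    have := GaussLegendreAux.natDegree_iter_u K K (by omega)
    rwa [show 2*K - K = K by omega] at this
  have hq0 : q ≠ 0 := by
    intro h
    rw [h, natDegree_zero] at hq
    omega
  set w : ℝ[X] := ∏ ℓ : Fin K, (X - C (s ℓ)) with hwdef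
  have hw : w.Monic := monic_prod_of_monic _ _ (fun i _ => monic_X_sub_C _)
  have hwdeg : w.natDegree = K := by
    rw [hwdef, natDegree_prod _ _ (fun i _ => X_sub_C_ne_zero _)]
    simp [natDegree_X_sub_C]
  have hw0 : w ≠ 0 := hw.ne_zero
  have hw1 : w ≠ 1 := by
    intro h
    rw [h, natDegree_one] at hwdeg
    omega
  have hweval : ∀ ℓ : Fin K, w.eval (s ℓ) = 0 := by
    intro ℓ
    rw [hwdef, eval_prod]
    exact Finset.prod_eq_zero (Finset.mem_univ ℓ) (by simp)
  -- w divides q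
  have hmod : q %ₘ w = 0 := by
    apply Polynomial.eq_zero_of_natDegree_lt_card_of_eval_eq_zero _ hinj
    · intro ℓ
      have h1 := modByMonic_add_div q w
      have := congrArg (eval (s ℓ)) h1
      rw [eval_add, eval_mul, hweval ℓ, zero_mul, add_zero] at this
      rw [this]
      exact hroot ℓ
    · have := natDegree_modByMonic_lt q hw hw1
      rw [hwdeg] at this
      simpa using this
  obtain ⟨g, hg⟩ : w ∣ q := (modByMonic_eq_zero_iff_dvd hw).mp hmod
  have hg0 : g ≠ 0 := by
    intro h; rw [h, mul_zero] at hg; exact hq0 hg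
  have hgdeg : g.natDegree = 0 := by
    have := natDegree_mul hw0 hg0
    rw [← hg, hq, hwdeg] at this
    omega
  set c : ℝ := g.coeff 0 with hcdef
  have hgC : g = C c := eq_C_of_natDegree_eq_zero hgdeg
  have hc0 : c ≠ 0 := by
    intro h; rw [h, map_zero] at hgC; exact hg0 hgC
  -- orthogonality transferred to w
  have orthoW : ∀ f : ℝ[X], f.natDegree < K → (∫ x in (-1:ℝ)..1, (w*f).eval x) = 0 := by
    intro f hf
    have h1 := GaussLegendreAux.ortho K f hf
    have h2 : (∫ x in (-1:ℝ)..1, q.eval x * f.eval x)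
        = c * ∫ x in (-1:ℝ)..1, (w*f).eval x := by
      rw [← intervalIntegral.integral_const_mul]
      congr 1
      funext x
      rw [hg, hgC]
      simp [eval_mul]
      ring
    rw [h1] at h2
    exact ((mul_eq_zero.mp h2.symm).resolve_left hc0)
  -- Lagrange basis and weights
  set B : Fin K → ℝ[X] := fun ℓ => Lagrange.basis Finset.univ s ℓ with hBdef
  set Wt : Fin K → ℝ := fun ℓ => ∫ x in (-1:ℝ)..1, (B ℓ).eval x with hWdef
  -- exactness
  have exact_ : ∀ f : ℝ[X], f.natDegree ≤ 2*K - 1 →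
      (∫ x in (-1:ℝ)..1, f.eval x) = ∑ ℓ : Fin K, f.eval (s ℓ) * Wt ℓ := by
    intro f hf
    have hdiv := modByMonic_add_div f w
    set r : ℝ[X] := f %ₘ w with hrdef
    have hreval : ∀ ℓ : Fin K, r.eval (s ℓ) = f.eval (s ℓ) := by
      intro ℓ
      have := congrArg (eval (s ℓ)) hdiv
      rwa [eval_add, eval_mul, hweval ℓ, zero_mul, add_zero] at this
    have hsplit : (∫ x in (-1:ℝ)..1, f.eval x)
        = (∫ x in (-1:ℝ)..1, (w * (f /ₘ w)).eval x) + ∫ x in (-1:ℝ)..1, r.eval x := by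
      rw [← intervalIntegral.integral_add (GaussLegendreAux.intg _ _ _)
        (GaussLegendreAux.intg _ _ _)]
      congr 1
      funext x
      conv_lhs => rw [← hdiv]
      rw [eval_add]
      ring
    have hdivdeg : (f /ₘ w).natDegree < K := by
      rw [natDegree_divByMonic f hw, hwdeg]
      omega
    rw [hsplit, orthoW _ hdivdeg, zero_add]
    -- r is the Lagrange interpolation of f
    have hrlt : r.degree < (Finset.univ : Finset (Fin K)).card := by
      have h1 := degree_modByMonic_lt f hw
      have h2 : w.degree = (K : WithBot ℕ) := by
        rw [degree_eq_natDegree hw0, hwdeg]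
      rw [h2] at h1
      simpa [Finset.card_univ] using h1
    have hr : r = Lagrange.interpolate Finset.univ s (fun ℓ => f.eval (s ℓ)) :=
      Lagrange.eq_interpolate_of_eval_eq _ hinj.injOn hrlt (fun i _ => hreval i)
    have hfun : ∀ x : ℝ, r.eval x = ∑ i : Fin K, f.eval (s i) * (B i).eval x := by
      intro x
      rw [hr, Lagrange.interpolate_apply, eval_finset_sum]
      exact Finset.sum_congr rfl fun i _ => by rw [eval_mul, eval_C]
    calc (∫ x in (-1:ℝ)..1, r.eval x)
        = ∫ x in (-1:ℝ)..1, ∑ i : Fin K, f.eval (s i) * (B i).eval x := by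
          simp only [hfun]
      _ = ∑ i : Fin K, ∫ x in (-1:ℝ)..1, f.eval (s i) * (B i).eval x :=
          intervalIntegral.integral_finset_sum (fun i _ =>
            (GaussLegendreAux.intg (B i) (-1) 1).const_mul _)
      _ = ∑ i : Fin K, f.eval (s i) * Wt i := by
          exact Finset.sum_congr rfl fun i _ => intervalIntegral.integral_const_mul _ _
  -- weights are nonnegative
  have hWt : ∀ ℓ : Fin K, 0 ≤ Wt ℓ := by
    intro ℓ
    set b : ℝ[X] := B ℓ with hbdef
    have hbdeg : b.natDegree = K - 1 := by
      have := Lagrange.natDegree_basis hinj.injOn (Finset.mem_univ ℓ)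
      simpa [Finset.card_univ] using this
    have hsq : (b^2).natDegree ≤ 2*K - 1 := by
      rw [natDegree_pow, hbdeg]
      omega
    have hex := exact_ (b^2) hsq
    have hsum : (∑ j : Fin K, (b^2).eval (s j) * Wt j) = Wt ℓ := by
      rw [Finset.sum_eq_single ℓ]
      · rw [eval_pow, hbdef, hBdef]
        rw [Lagrange.eval_basis_self hinj.injOn (Finset.mem_univ ℓ)]
        norm_num
      · intro j _ hj
        rw [eval_pow, hbdef, hBdef,
          Lagrange.eval_basis_of_ne (Ne.symm hj) (Finset.mem_univ j)]
        norm_num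
      · intro h; exact absurd (Finset.mem_univ ℓ) h
    rw [hsum] at hex
    rw [← hex]
    apply intervalIntegral.integral_nonneg (by norm_num)
    intro u _
    rw [eval_pow]
    positivity
  rw [exact_ p hdeg]
  exact Finset.sum_nonneg fun ℓ _ => mul_nonneg (hpos ℓ) (hWt ℓ)
end

section
/- Let f : ℝ × ℝ × ℝ → ℝ be C¹ with support contained in {(t,x,v) : |v| ≤ R} for some R > 0, let E : ℝ × ℝ → ℝ be continuous, and suppose ∂_t f + v ∂_x f + E(t,x) ∂_v f = 0 everywhere. Suppose moreover that ∂_t E(t,x) exists and equals −m(t,x) for all (t,x), where m = ∫_ℝ v f dv. Then E is twice differentiable in t and ∂_t² E(t,x) = ∂_x 𝔼(t,x) − ρ(t,x) E(t,x) for all (t,x), where ρ = ∫_ℝ f dv and 𝔼 = ∫_ℝ v² f dv. -/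
open MeasureTheory Set

lemma vp_not_mem_Icc {R v : ℝ} (hv : v ∉ Icc (-R) R) : R < |v| := by
  rw [Set.mem_Icc, ← abs_le, not_le] at hv; exact hv

lemma vp_integrable_aux (R : ℝ) (φ : ℝ → ℝ) (hc : Continuous φ)
    (h0 : ∀ v, R < |v| → φ v = 0) : Integrable φ :=
  hc.integrable_of_hasCompactSupport
    (HasCompactSupport.intro isCompact_Icc (fun v hv => h0 v (vp_not_mem_Icc hv)))

lemma vp_deriv_zero (R : ℝ) (h : ℝ → ℝ) (hs : ∀ v, R < |v| → h v = 0)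
    (v : ℝ) (hv : R < |v|) : deriv h v = 0 := by
  have hopen : IsOpen {w : ℝ | R < |w|} := isOpen_lt continuous_const continuous_abs
  have heq : h =ᶠ[nhds v] (fun _ => (0:ℝ)) := by
    filter_upwards [hopen.mem_nhds hv] with w hw using hs w hw
  rw [heq.deriv_eq, deriv_const]

/-- Differentiation under the integral sign for a compactly-v-supported C¹ integrand. -/
lemma vp_hasDerivAt_integral (R : ℝ) (g : ℝ → ℝ → ℝ)
    (hg : ContDiff ℝ 1 (fun p : ℝ × ℝ => g p.1 p.2))
    (hs : ∀ s v, R < |v| → g s v = 0) (s₀ : ℝ) :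
    HasDerivAt (fun s => ∫ v : ℝ, g s v) (∫ v : ℝ, deriv (fun s => g s v) s₀) s₀ := by
  set G : ℝ × ℝ → ℝ := fun p => g p.1 p.2 with hG
  set g' : ℝ → ℝ → ℝ := fun s v => fderiv ℝ G (s, v) (1, 0) with hg'
  have hd : ∀ s v, HasDerivAt (fun s' => g s' v) (g' s v) s := by
    intro s v
    have h1 : HasFDerivAt G (fderiv ℝ G (s, v)) (s, v) :=
      (hg.differentiable one_ne_zero (s, v)).hasFDerivAt
    have h2 : HasDerivAt (fun s' : ℝ => (s', v)) ((1 : ℝ), (0 : ℝ)) s :=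
      (hasDerivAt_id s).prodMk (hasDerivAt_const s v)
    exact h1.comp_hasDerivAt s h2
  have hg'cont : Continuous (fun p : ℝ × ℝ => g' p.1 p.2) := by
    have h1 : Continuous (fun p : ℝ × ℝ => fderiv ℝ G p) := hg.continuous_fderiv one_ne_zero
    exact h1.clm_apply continuous_const
  have hg'zero : ∀ s v, R < |v| → g' s v = 0 := by
    intro s v hv
    have hz : (fun s' => g s' v) = fun _ => (0 : ℝ) := funext fun s' => hs s' v hv
    have := hd s v
    rw [hz] at this
    exact this.unique (hasDerivAt_const s 0)
  -- compactness bound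
  obtain ⟨C, hC⟩ : ∃ C, ∀ p ∈ Icc (s₀ - 1) (s₀ + 1) ×ˢ Icc (-R) R, ‖g' p.1 p.2‖ ≤ C := by
    have hK : IsCompact (Icc (s₀ - 1) (s₀ + 1) ×ˢ Icc (-R) R) :=
      isCompact_Icc.prod isCompact_Icc
    exact hK.exists_bound_of_continuousOn hg'cont.continuousOn
  set bound : ℝ → ℝ := Set.indicator (Icc (-R) R) (fun _ => C) with hb
  have hmain := hasDerivAt_integral_of_dominated_loc_of_deriv_le (Metric.ball_mem_nhds s₀ one_pos)
    (F := fun s v => g s v) (F' := fun s v => g' s v) (x₀ := s₀) (bound := bound) (μ := volume)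
    (Filter.Eventually.of_forall fun s =>
      (hg.continuous.comp (Continuous.prodMk_right s)).aestronglyMeasurable)
    ((hg.continuous.comp (Continuous.prodMk_right s₀)).integrable_of_hasCompactSupport
      (HasCompactSupport.intro isCompact_Icc (fun v hv => hs s₀ v (vp_not_mem_Icc hv))))
    ((hg'cont.comp (Continuous.prodMk_right s₀)).aestronglyMeasurable)
    (Filter.Eventually.of_forall fun v => by
      intro s hsb
      by_cases hv : v ∈ Icc (-R) R
      · have hmem : (s, v) ∈ Icc (s₀ - 1) (s₀ + 1) ×ˢ Icc (-R) R := by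
          constructor
          · have := Metric.mem_ball.mp hsb
            rw [Real.dist_eq] at this
            constructor <;> [linarith [abs_lt.mp this]; linarith [(abs_lt.mp this).2]]
          · exact hv
        show ‖g' s v‖ ≤ bound v
        rw [hb, Set.indicator_of_mem hv]
        exact hC _ hmem
      · show ‖g' s v‖ ≤ bound v
        rw [hb, Set.indicator_of_notMem hv, hg'zero s v (vp_not_mem_Icc hv), norm_zero])
    (by
      rw [hb, integrable_indicator_iff measurableSet_Icc]
      exact integrableOn_const measure_Icc_lt_top.ne)
    (Filter.Eventually.of_forall fun v s _ => hd s v)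
  have h2 := hmain.2
  have : (∫ v : ℝ, deriv (fun s => g s v) s₀) = ∫ v : ℝ, g' s₀ v :=
    integral_congr_ae (Filter.Eventually.of_forall fun v => (hd s₀ v).deriv)
  rw [this]
  exact h2

/-- Integration by parts on the line, for a compactly supported C¹ function. -/
lemma vp_ibp (R : ℝ) (hR : 0 < R) (h : ℝ → ℝ) (hh : ContDiff ℝ 1 h)
    (hs : ∀ v, R < |v| → h v = 0) :
    (∫ v : ℝ, v * deriv h v) = -∫ v : ℝ, h v := by
  have hab : -(R + 1) ≤ R + 1 := by linarith
  have hconv : ∀ φ : ℝ → ℝ, (∀ v, R < |v| → φ v = 0) →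
      (∫ v : ℝ, φ v) = ∫ v in (-(R+1))..(R+1), φ v := by
    intro φ h0
    rw [intervalIntegral.integral_of_le hab]
    refine (setIntegral_eq_integral_of_forall_compl_eq_zero fun v hv => ?_).symm
    apply h0
    rw [Set.mem_Ioc, not_and_or, not_lt, not_le] at hv
    rcases hv with hv | hv
    · rw [abs_of_nonpos (by linarith)]; linarith
    · rw [abs_of_pos (by linarith)]; linarith
  have hd0 : ∀ v, R < |v| → deriv h v = 0 := vp_deriv_zero R h hs
  have h1 : (∫ v : ℝ, v * deriv h v) = ∫ v in (-(R+1))..(R+1), v * deriv h v :=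
    hconv _ (fun v hv => by rw [hd0 v hv, mul_zero])
  have h2 : (∫ v : ℝ, h v) = ∫ v in (-(R+1))..(R+1), h v := hconv _ hs
  rw [h1, h2]
  have hibp := intervalIntegral.integral_mul_deriv_eq_deriv_mul
    (u := fun x : ℝ => x) (u' := fun _ => (1:ℝ)) (v := h) (v' := deriv h)
    (a := -(R+1)) (b := R+1)
    (fun x _ => hasDerivAt_id x)
    (fun x _ => (hh.differentiable one_ne_zero x).hasDerivAt)
    intervalIntegrable_const
    ((hh.continuous_deriv le_rfl).intervalIntegrable _ _)
  have hb0 : h (R + 1) = 0 := hs _ (by rw [abs_of_pos (by linarith)]; linarith)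
  have ha0 : h (-(R + 1)) = 0 := hs _ (by rw [abs_of_nonpos (by linarith)]; linarith)
  rw [hb0, ha0] at hibp
  simpa using hibp

/-- If `∂_t E = −m`, then the electric field is twice differentiable in time and
`∂_t² E = ∂_x 𝔼 − ρ E`. -/
theorem vlasov_Efield_second_time_derivative (R : ℝ) (hR : 0 < R)
    (f : ℝ → ℝ → ℝ → ℝ) (E : ℝ → ℝ → ℝ)
    (hf : ContDiff ℝ 1 (fun p : ℝ × ℝ × ℝ => f p.1 p.2.1 p.2.2))
    (hsupp : ∀ t x v : ℝ, R < |v| → f t x v = 0)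
    (hE : Continuous (fun p : ℝ × ℝ => E p.1 p.2))
    (hVlasov : ∀ t x v : ℝ,
      deriv (fun s => f s x v) t + v * deriv (fun y => f t y v) x +
        E t x * deriv (fun w => f t x w) v = 0)
    (hEt : ∀ t x : ℝ, HasDerivAt (fun s => E s x) (-(∫ v : ℝ, v * f t x v)) t) :
    ∀ t x : ℝ,
      HasDerivAt (fun s => deriv (fun r => E r x) s)
        (deriv (fun y => ∫ v : ℝ, v ^ 2 * f t y v) x - (∫ v : ℝ, f t x v) * E t x) t := by
  intro t x
  set F : ℝ × ℝ × ℝ → ℝ := fun p => f p.1 p.2.1 p.2.2 with hF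
  have hpdcont : Continuous (fun p : ℝ × ℝ × ℝ => fderiv ℝ F p) := hf.continuous_fderiv one_ne_zero
  -- partial derivatives
  have hd1 : ∀ t x v : ℝ, HasDerivAt (fun s => f s x v) (fderiv ℝ F (t, x, v) (1, 0, 0)) t := by
    intro t x v
    exact ((hf.differentiable one_ne_zero (t, x, v)).hasFDerivAt).comp_hasDerivAt t
      ((hasDerivAt_id t).prodMk (hasDerivAt_const t (x, v)))
  have hd2 : ∀ t x v : ℝ, HasDerivAt (fun y => f t y v) (fderiv ℝ F (t, x, v) (0, 1, 0)) x := by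
    intro t x v
    exact ((hf.differentiable one_ne_zero (t, x, v)).hasFDerivAt).comp_hasDerivAt x
      ((hasDerivAt_const x t).prodMk ((hasDerivAt_id x).prodMk (hasDerivAt_const x v)))
  have hd3 : ∀ t x v : ℝ, HasDerivAt (fun w => f t x w) (fderiv ℝ F (t, x, v) (0, 0, 1)) v := by
    intro t x v
    exact ((hf.differentiable one_ne_zero (t, x, v)).hasFDerivAt).comp_hasDerivAt v
      ((hasDerivAt_const v t).prodMk ((hasDerivAt_const v x).prodMk (hasDerivAt_id v)))
  set pd1 : ℝ → ℝ → ℝ → ℝ := fun t x v => fderiv ℝ F (t, x, v) (1, 0, 0) with hpd1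
  set pd2 : ℝ → ℝ → ℝ → ℝ := fun t x v => fderiv ℝ F (t, x, v) (0, 1, 0) with hpd2
  set pd3 : ℝ → ℝ → ℝ → ℝ := fun t x v => fderiv ℝ F (t, x, v) (0, 0, 1) with hpd3
  -- vanishing of partial derivatives for large |v|
  have hz2 : ∀ v : ℝ, R < |v| → pd2 t x v = 0 := by
    intro v hv
    have hzero : (fun y => f t y v) = fun _ => (0 : ℝ) := funext fun y => hsupp t y v hv
    have := hd2 t x v
    rw [hzero] at this
    exact this.unique (hasDerivAt_const x 0)
  have hz3 : ∀ v : ℝ, R < |v| → pd3 t x v = 0 := by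
    intro v hv
    have := (hd3 t x v).deriv
    rw [vp_deriv_zero R (fun w => f t x w) (fun w hw => hsupp t x w hw) v hv] at this
    exact this.symm
  -- continuity of partial derivatives in v
  have hc2 : Continuous (fun v => pd2 t x v) := by
    have : Continuous (fun v : ℝ => fderiv ℝ F (t, x, v)) :=
      hpdcont.comp (by fun_prop)
    exact this.clm_apply continuous_const
  have hc3 : Continuous (fun v => pd3 t x v) := by
    have : Continuous (fun v : ℝ => fderiv ℝ F (t, x, v)) :=
      hpdcont.comp (by fun_prop)
    exact this.clm_apply continuous_const
  -- key 1 : time derivative of the momentum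
  have key1 : HasDerivAt (fun s => ∫ v : ℝ, v * f s x v) (∫ v : ℝ, v * pd1 t x v) t := by
    have h := vp_hasDerivAt_integral R (fun s v => v * f s x v)
      (contDiff_snd.mul (hf.comp (contDiff_fst.prodMk (contDiff_const.prodMk contDiff_snd))))
      (fun s v hv => by simp [hsupp s x v hv]) t
    have heq : (∫ v : ℝ, deriv (fun s => v * f s x v) t) = ∫ v : ℝ, v * pd1 t x v :=
      MeasureTheory.integral_congr_ae (Filter.Eventually.of_forall fun v =>
        ((hd1 t x v).const_mul v).deriv)
    rwa [heq] at h
  -- key 2 : x-derivative of the energy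
  have key2 : deriv (fun y => ∫ v : ℝ, v ^ 2 * f t y v) x = ∫ v : ℝ, v ^ 2 * pd2 t x v := by
    have h := vp_hasDerivAt_integral R (fun y v => v ^ 2 * f t y v)
      ((contDiff_snd.pow 2).mul (hf.comp (contDiff_const.prodMk (contDiff_fst.prodMk contDiff_snd))))
      (fun y v hv => by simp [hsupp t y v hv]) x
    rw [h.deriv]
    exact MeasureTheory.integral_congr_ae (Filter.Eventually.of_forall fun v =>
      ((hd2 t x v).const_mul (v ^ 2)).deriv)
  -- key 3 : integration by parts
  have key3 : (∫ v : ℝ, v * pd3 t x v) = -∫ v : ℝ, f t x v := by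
    have h := vp_ibp R hR (fun w => f t x w)
      (hf.comp (contDiff_const.prodMk (contDiff_const.prodMk contDiff_id)))
      (fun v hv => hsupp t x v hv)
    have heq : (∫ v : ℝ, v * deriv (fun w => f t x w) v) = ∫ v : ℝ, v * pd3 t x v :=
      MeasureTheory.integral_congr_ae (Filter.Eventually.of_forall fun v => by
        show v * deriv (fun w => f t x w) v = v * pd3 t x v
        rw [(hd3 t x v).deriv])
    rw [heq] at h
    simpa using h
  -- Vlasov pointwise identity
  have hvl : ∀ v : ℝ, v * pd1 t x v = -(v ^ 2 * pd2 t x v) - E t x * (v * pd3 t x v) := by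
    intro v
    have h := hVlasov t x v
    rw [(hd1 t x v).deriv, (hd2 t x v).deriv, (hd3 t x v).deriv] at h
    linear_combination v * h
  -- integrability
  have hi2 : MeasureTheory.Integrable (fun v : ℝ => v ^ 2 * pd2 t x v) :=
    vp_integrable_aux R _ ((continuous_id.pow 2).mul hc2)
      (fun v hv => by rw [hz2 v hv, mul_zero])
  have hi3 : MeasureTheory.Integrable (fun v : ℝ => v * pd3 t x v) :=
    vp_integrable_aux R _ (continuous_id.mul hc3)
      (fun v hv => by rw [hz3 v hv, mul_zero])
  -- the integral identity
  have hint : (∫ v : ℝ, v * pd1 t x v)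
      = -(∫ v : ℝ, v ^ 2 * pd2 t x v) - E t x * ∫ v : ℝ, v * pd3 t x v := by
    rw [show (fun v : ℝ => v * pd1 t x v)
        = fun v : ℝ => -(v ^ 2 * pd2 t x v) - E t x * (v * pd3 t x v) from funext hvl]
    have hs1 : MeasureTheory.Integrable (fun v : ℝ => -(v ^ 2 * pd2 t x v)) := by
      exact hi2.neg
    have hs2 : MeasureTheory.Integrable (fun v : ℝ => E t x * (v * pd3 t x v)) :=
      hi3.const_mul (E t x)
    rw [MeasureTheory.integral_sub hs1 hs2, MeasureTheory.integral_neg,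
      MeasureTheory.integral_const_mul]
  -- assemble
  have heqfun : (fun s => deriv (fun r => E r x) s) = fun s => -∫ v : ℝ, v * f s x v :=
    funext fun s => (hEt s x).deriv
  rw [heqfun]
  have hfinal := key1.neg
  have hD : deriv (fun y => ∫ v : ℝ, v ^ 2 * f t y v) x - (∫ v : ℝ, f t x v) * E t x
      = -(∫ v : ℝ, v * pd1 t x v) := by
    rw [hint, key2, key3]
    ring
  rw [hD]
  exact hfinal
end

section
/- Let f : ℝ × ℝ × ℝ → ℝ be C² with support contained in {(t,x,v) : |v| ≤ R} for some R > 0, let E : ℝ × ℝ → ℝ be C¹, and suppose ∂_t f + v ∂_x f + E(t,x) ∂_v f = 0 everywhere as well as ∂_t E(t,x) = −m(t,x) for all (t,x), where m = ∫_ℝ v f dv. Then E is three times differentiable in t and ∂_t³ E(t,x) = 2 ∂_x( m(t,x) E(t,x) ) − ∂_x² 𝔽(t,x) + E(t,x) ∂_x m(t,x) + ρ(t,x) m(t,x) for all (t,x), where ρ = ∫_ℝ f dv and 𝔽 = ∫_ℝ v³ f dv. -/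
open MeasureTheory intervalIntegral Metric

lemma integrable_of_supported {R : ℝ} {h : ℝ → ℝ} (hc : Continuous h)
    (hs : ∀ v, R < |v| → h v = 0) : Integrable h := by
  apply hc.integrable_of_hasCompactSupport
  apply HasCompactSupport.intro (isCompact_Icc (a := -R) (b := R))
  intro v hv
  exact hs v (by rw [← not_le, abs_le]; simpa [Set.mem_Icc] using hv)

lemma hasDerivAt_integral_param {R : ℝ} {g : ℝ → ℝ → ℝ}
    (hg : ContDiff ℝ 1 (fun q : ℝ × ℝ => g q.1 q.2))
    (hsupp : ∀ s v, R < |v| → g s v = 0) (s₀ : ℝ) :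
    HasDerivAt (fun s => ∫ v, g s v) (∫ v, deriv (fun s => g s v) s₀) s₀ := by
  set G : ℝ × ℝ → ℝ := fun q => g q.1 q.2 with hG
  have hGd : Differentiable ℝ G := hg.differentiable one_ne_zero
  have hsec : ∀ (s v : ℝ), HasDerivAt (fun s' => g s' v) (fderiv ℝ G (s, v) (1, 0)) s := by
    intro s v
    exact (hGd (s, v)).hasFDerivAt.comp_hasDerivAt s
      ((hasDerivAt_id s).prodMk (hasDerivAt_const s v))
  have hfc : Continuous fun q : ℝ × ℝ => fderiv ℝ G q := hg.continuous_fderiv one_ne_zero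
  have hfz : ∀ s v, R < |v| → fderiv ℝ G (s, v) = 0 := by
    intro s v hv
    have hopen : IsOpen {q : ℝ × ℝ | R < |q.2|} := isOpen_lt continuous_const continuous_snd.abs
    have hzz : HasFDerivAt G (0 : ℝ × ℝ →L[ℝ] ℝ) (s, v) := by
      apply (hasFDerivAt_const (0 : ℝ) (s, v)).congr_of_eventuallyEq
      filter_upwards [hopen.mem_nhds hv] with q hq
      exact hsupp q.1 q.2 hq
    exact hzz.fderiv
  obtain ⟨C, hC⟩ := IsCompact.exists_bound_of_continuousOn
    ((isCompact_closedBall s₀ 1).prod (isCompact_closedBall (0 : ℝ) R)) hfc.continuousOn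
  set bound : ℝ → ℝ := (Set.Icc (-R) R).indicator fun _ => max C 0 with hbound
  have key := hasDerivAt_integral_of_dominated_loc_of_deriv_le (𝕜 := ℝ) (μ := volume)
    (F := fun s v => g s v) (F' := fun s v => fderiv ℝ G (s, v) (1, 0)) (x₀ := s₀)
    (bound := bound) (ball_mem_nhds s₀ zero_lt_one)
    (Filter.Eventually.of_forall fun s =>
      (hg.continuous.comp (continuous_const.prodMk continuous_id)).aestronglyMeasurable)
    (integrable_of_supported (hg.continuous.comp (continuous_const.prodMk continuous_id))
      (hsupp s₀))
    (((ContinuousLinearMap.apply ℝ ℝ ((1 : ℝ), (0 : ℝ))).continuous.comp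
      (hfc.comp (continuous_const.prodMk continuous_id))).aestronglyMeasurable)
    ?_ ?_ (Filter.Eventually.of_forall fun v s _ => hsec s v)
  · have heq : (fun v => fderiv ℝ G (s₀, v) (1, 0)) = fun v => deriv (fun s => g s v) s₀ :=
      funext fun v => ((hsec s₀ v).deriv).symm
    rw [← heq]
    exact key.2
  · apply Filter.Eventually.of_forall
    intro v s hs
    by_cases hv : |v| ≤ R
    · have hb : bound v = max C 0 := by
        rw [hbound, Set.indicator_of_mem]
        rw [Set.mem_Icc, ← abs_le]; exact hv
      have hmem : (s, v) ∈ closedBall s₀ 1 ×ˢ closedBall (0 : ℝ) R := by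
        constructor
        · exact ball_subset_closedBall hs
        · simpa [Real.dist_eq] using hv
      calc ‖fderiv ℝ G (s, v) (1, 0)‖ ≤ ‖fderiv ℝ G (s, v)‖ * ‖((1 : ℝ), (0 : ℝ))‖ :=
            (fderiv ℝ G (s, v)).le_opNorm _
        _ ≤ C * 1 := by
            apply mul_le_mul (hC _ hmem) _ (norm_nonneg _)
              ((norm_nonneg _).trans (hC _ hmem))
            rw [Prod.norm_def]; simp
        _ ≤ bound v := by rw [hb, mul_one]; exact le_max_left _ _
    · push_neg at hv
      show ‖fderiv ℝ G (s, v) (1, 0)‖ ≤ bound v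
      rw [hfz s v hv]
      simp only [ContinuousLinearMap.zero_apply, norm_zero]
      exact Set.indicator_nonneg (fun _ _ => le_max_right _ _) v
  · rw [hbound]
    rw [integrable_indicator_iff measurableSet_Icc]
    exact integrableOn_const measure_Icc_lt_top.ne

lemma integral_parts {R : ℝ} (hR : 0 < R) {h h' φ φ' : ℝ → ℝ}
    (hh : ∀ v, HasDerivAt h (h' v) v) (hφ : ∀ v, HasDerivAt φ (φ' v) v)
    (hah' : Continuous h') (haφ' : Continuous φ')
    (hs : ∀ v, R < |v| → h v = 0) :
    ∫ v, φ v * h' v = -∫ v, φ' v * h v := by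
  have hs' : ∀ v, R < |v| → h' v = 0 := by
    intro v hv
    have hopen : IsOpen {w : ℝ | R < |w|} := isOpen_lt continuous_const continuous_abs
    have hz : HasDerivAt h 0 v := by
      apply (hasDerivAt_const v (0 : ℝ)).congr_of_eventuallyEq
      filter_upwards [hopen.mem_nhds hv] with w hw
      exact hs w hw
    exact (hh v).unique hz
  set a : ℝ := -(R + 1) with ha
  set b : ℝ := R + 1 with hb
  have hab : a ≤ b := by rw [ha, hb]; linarith
  have hout : ∀ v, v ∉ Set.Ioc a b → R < |v| := by
    intro v hv
    by_contra hc
    push_neg at hc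
    obtain ⟨h1, h2⟩ := abs_le.1 hc
    exact hv (Set.mem_Ioc.2 ⟨by rw [ha]; linarith, by rw [hb]; linarith⟩)
  have e1 : ∫ v, φ v * h' v = ∫ v in a..b, φ v * h' v := by
    rw [intervalIntegral.integral_of_le hab,
      setIntegral_eq_integral_of_forall_compl_eq_zero]
    intro v hv; rw [hs' v (hout v hv), mul_zero]
  have e2 : ∫ v, φ' v * h v = ∫ v in a..b, φ' v * h v := by
    rw [intervalIntegral.integral_of_le hab,
      setIntegral_eq_integral_of_forall_compl_eq_zero]
    intro v hv; rw [hs v (hout v hv), mul_zero]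
  have key := intervalIntegral.integral_mul_deriv_eq_deriv_mul (a := a) (b := b)
    (fun y _ => hφ y) (fun y _ => hh y) (haφ'.intervalIntegrable a b)
    (hah'.intervalIntegrable a b)
  have hhb : h b = 0 := hs b (by rw [hb, abs_of_pos (by linarith)]; linarith)
  have hha : h a = 0 := hs a (by rw [ha, abs_of_neg (by linarith)]; linarith)
  rw [e1, e2, key, hhb, hha]
  ring

open MeasureTheory intervalIntegral Metric


lemma contDiff_moment {R : ℝ} {n : ℕ∞} {g : ℝ × ℝ → ℝ → ℝ}
    (hg : ContDiff ℝ n (fun q : (ℝ × ℝ) × ℝ => g q.1 q.2))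
    (hsupp : ∀ p v, R < |v| → g p v = 0) :
    ContDiff ℝ n (fun p : ℝ × ℝ => ∫ v, g p v) := by
  have hconv := contDiffOn_convolution_right_with_param (𝕜 := ℝ)
    (L := ContinuousLinearMap.mul ℝ ℝ) (f := fun _ : ℝ => (1 : ℝ)) (μ := volume)
    (g := g) (s := Set.univ) (k := closedBall (0 : ℝ) R)
    isOpen_univ (isCompact_closedBall 0 R)
    (fun p x _ hx => hsupp p x (by simpa [Real.norm_eq_abs, not_le] using hx))
    (locallyIntegrable_const 1) (by rwa [Set.univ_prod_univ, contDiffOn_univ])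
  rw [Set.univ_prod_univ, contDiffOn_univ] at hconv
  have h2 : ContDiff ℝ n (fun p : ℝ × ℝ =>
      convolution (fun _ : ℝ => (1 : ℝ)) (g p) (ContinuousLinearMap.mul ℝ ℝ) volume 0) :=
    hconv.comp (contDiff_id.prodMk contDiff_const)
  have h3 : (fun p : ℝ × ℝ =>
      convolution (fun _ : ℝ => (1 : ℝ)) (g p) (ContinuousLinearMap.mul ℝ ℝ) volume 0)
      = fun p : ℝ × ℝ => ∫ v, g p v := by
    funext p
    rw [convolution_def]
    simp only [ContinuousLinearMap.mul_apply', one_mul, zero_sub]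
    exact integral_neg_eq_self _ _
  rwa [h3] at h2

lemma pd_x {u : ℝ × ℝ → ℝ} (hu : Differentiable ℝ u) (t x : ℝ) :
    HasDerivAt (fun y => u (t, y)) (fderiv ℝ u (t, x) (0, 1)) x :=
  (hu (t, x)).hasFDerivAt.comp_hasDerivAt x ((hasDerivAt_const x t).prodMk (hasDerivAt_id x))

lemma pd_t {u : ℝ × ℝ → ℝ} (hu : Differentiable ℝ u) (t x : ℝ) :
    HasDerivAt (fun s => u (s, x)) (fderiv ℝ u (t, x) (1, 0)) t :=
  (hu (t, x)).hasFDerivAt.comp_hasDerivAt t ((hasDerivAt_id t).prodMk (hasDerivAt_const t x))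

lemma pd2_t {u : ℝ × ℝ → ℝ} (hu : ContDiff ℝ 2 u) (e : ℝ × ℝ) (t x : ℝ) :
    HasDerivAt (fun s => fderiv ℝ u (s, x) e)
      (fderiv ℝ (fderiv ℝ u) (t, x) (1, 0) e) t := by
  have hfd : ContDiff ℝ 1 (fderiv ℝ u) := hu.fderiv_right (by norm_num)
  have h1 : HasDerivAt (fun s => fderiv ℝ u (s, x))
      (fderiv ℝ (fderiv ℝ u) (t, x) (1, 0)) t :=
    (hfd.differentiable one_ne_zero (t, x)).hasFDerivAt.comp_hasDerivAt t
      ((hasDerivAt_id t).prodMk (hasDerivAt_const t x))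
  exact (ContinuousLinearMap.apply ℝ ℝ e).hasFDerivAt.comp_hasDerivAt t h1

lemma pd2_x {u : ℝ × ℝ → ℝ} (hu : ContDiff ℝ 2 u) (e : ℝ × ℝ) (t x : ℝ) :
    HasDerivAt (fun y => fderiv ℝ u (t, y) e)
      (fderiv ℝ (fderiv ℝ u) (t, x) (0, 1) e) x := by
  have hfd : ContDiff ℝ 1 (fderiv ℝ u) := hu.fderiv_right (by norm_num)
  have h1 : HasDerivAt (fun y => fderiv ℝ u (t, y))
      (fderiv ℝ (fderiv ℝ u) (t, x) (0, 1)) x :=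
    (hfd.differentiable one_ne_zero (t, x)).hasFDerivAt.comp_hasDerivAt x
      ((hasDerivAt_const x t).prodMk (hasDerivAt_id x))
  exact (ContinuousLinearMap.apply ℝ ℝ e).hasFDerivAt.comp_hasDerivAt x h1

lemma snd_deriv_symm {u : ℝ × ℝ → ℝ} (hu : ContDiff ℝ 2 u) (p : ℝ × ℝ) :
    fderiv ℝ (fderiv ℝ u) p (1, 0) (0, 1) = fderiv ℝ (fderiv ℝ u) p (0, 1) (1, 0) := by
  have hfd : ContDiff ℝ 1 (fderiv ℝ u) := hu.fderiv_right (by norm_num)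
  exact second_derivative_symmetric
    (fun y => (hu.differentiable two_ne_zero y).hasFDerivAt)
    ((hfd.differentiable one_ne_zero p).hasFDerivAt) _ _

lemma line3_t {f : ℝ → ℝ → ℝ → ℝ}
    (hf1 : Differentiable ℝ (fun p : ℝ × ℝ × ℝ => f p.1 p.2.1 p.2.2)) (t x v : ℝ) :
    HasDerivAt (fun s => f s x v)
      (fderiv ℝ (fun p : ℝ × ℝ × ℝ => f p.1 p.2.1 p.2.2) (t, x, v) (1, 0, 0)) t :=
  by
  have h := (hf1 (t, x, v)).hasFDerivAt.comp_hasDerivAt t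
    ((hasDerivAt_id t).prodMk ((hasDerivAt_const t x).prodMk (hasDerivAt_const t v)))
  exact h

lemma line3_x {f : ℝ → ℝ → ℝ → ℝ}
    (hf1 : Differentiable ℝ (fun p : ℝ × ℝ × ℝ => f p.1 p.2.1 p.2.2)) (t x v : ℝ) :
    HasDerivAt (fun y => f t y v)
      (fderiv ℝ (fun p : ℝ × ℝ × ℝ => f p.1 p.2.1 p.2.2) (t, x, v) (0, 1, 0)) x :=
  by
  have h := (hf1 (t, x, v)).hasFDerivAt.comp_hasDerivAt x
    ((hasDerivAt_const x t).prodMk ((hasDerivAt_id x).prodMk (hasDerivAt_const x v)))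
  exact h

lemma line3_v {f : ℝ → ℝ → ℝ → ℝ}
    (hf1 : Differentiable ℝ (fun p : ℝ × ℝ × ℝ => f p.1 p.2.1 p.2.2)) (t x v : ℝ) :
    HasDerivAt (fun w => f t x w)
      (fderiv ℝ (fun p : ℝ × ℝ × ℝ => f p.1 p.2.1 p.2.2) (t, x, v) (0, 0, 1)) v :=
  by
  have h := (hf1 (t, x, v)).hasFDerivAt.comp_hasDerivAt v
    ((hasDerivAt_const v t).prodMk ((hasDerivAt_const v x).prodMk (hasDerivAt_id v)))
  exact h

lemma fderiv3_zero {R : ℝ} {f : ℝ → ℝ → ℝ → ℝ}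
    (hsupp : ∀ t x v : ℝ, R < |v| → f t x v = 0) {t x v : ℝ} (hv : R < |v|) :
    fderiv ℝ (fun p : ℝ × ℝ × ℝ => f p.1 p.2.1 p.2.2) (t, x, v) = 0 := by
  have hopen : IsOpen {q : ℝ × ℝ × ℝ | R < |q.2.2|} :=
    isOpen_lt continuous_const (continuous_snd.snd.abs)
  have hzz : HasFDerivAt (fun p : ℝ × ℝ × ℝ => f p.1 p.2.1 p.2.2)
      (0 : ℝ × ℝ × ℝ →L[ℝ] ℝ) (t, x, v) := by
    apply (hasFDerivAt_const (0 : ℝ) ((t, x, v) : ℝ × ℝ × ℝ)).congr_of_eventuallyEq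
    filter_upwards [hopen.mem_nhds hv] with q hq
    exact hsupp q.1 q.2.1 q.2.2 hq
  exact hzz.fderiv

section moments

variable {R : ℝ} {f : ℝ → ℝ → ℝ → ℝ}

lemma moment_t (hf : ContDiff ℝ 2 (fun p : ℝ × ℝ × ℝ => f p.1 p.2.1 p.2.2))
    (hsupp : ∀ t x v : ℝ, R < |v| → f t x v = 0) (j : ℕ) (t x : ℝ) :
    HasDerivAt (fun s => ∫ v, v ^ j * f s x v)
      (∫ v, v ^ j * fderiv ℝ (fun p : ℝ × ℝ × ℝ => f p.1 p.2.1 p.2.2) (t, x, v) (1, 0, 0)) t := by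
  have hf1 : Differentiable ℝ (fun p : ℝ × ℝ × ℝ => f p.1 p.2.1 p.2.2) :=
    hf.differentiable two_ne_zero
  have hg : ContDiff ℝ 1 (fun q : ℝ × ℝ => q.2 ^ j * f q.1 x q.2) :=
    (contDiff_snd.pow j).mul ((hf.of_le one_le_two).comp
      (contDiff_fst.prodMk (contDiff_const.prodMk contDiff_snd)))
  have h := hasDerivAt_integral_param (R := R) (g := fun s v => v ^ j * f s x v) hg
    (fun s v hv => by show v ^ j * f s x v = 0; rw [hsupp s x v hv, mul_zero]) t
  have heq : (fun v : ℝ => deriv (fun s => v ^ j * f s x v) t)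
      = fun v : ℝ => v ^ j *
        fderiv ℝ (fun p : ℝ × ℝ × ℝ => f p.1 p.2.1 p.2.2) (t, x, v) (1, 0, 0) :=
    funext fun v => ((line3_t hf1 t x v).const_mul (v ^ j)).deriv
  rw [heq] at h
  exact h

lemma moment_x (hf : ContDiff ℝ 2 (fun p : ℝ × ℝ × ℝ => f p.1 p.2.1 p.2.2))
    (hsupp : ∀ t x v : ℝ, R < |v| → f t x v = 0) (j : ℕ) (t x : ℝ) :
    HasDerivAt (fun y => ∫ v, v ^ j * f t y v)
      (∫ v, v ^ j * fderiv ℝ (fun p : ℝ × ℝ × ℝ => f p.1 p.2.1 p.2.2) (t, x, v) (0, 1, 0)) x := by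
  have hf1 : Differentiable ℝ (fun p : ℝ × ℝ × ℝ => f p.1 p.2.1 p.2.2) :=
    hf.differentiable two_ne_zero
  have hg : ContDiff ℝ 1 (fun q : ℝ × ℝ => q.2 ^ j * f t q.1 q.2) :=
    (contDiff_snd.pow j).mul ((hf.of_le one_le_two).comp
      (contDiff_const.prodMk (contDiff_fst.prodMk contDiff_snd)))
  have h := hasDerivAt_integral_param (R := R) (g := fun y v => v ^ j * f t y v) hg
    (fun y v hv => by show v ^ j * f t y v = 0; rw [hsupp t y v hv, mul_zero]) x
  have heq : (fun v : ℝ => deriv (fun y => v ^ j * f t y v) x)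
      = fun v : ℝ => v ^ j *
        fderiv ℝ (fun p : ℝ × ℝ × ℝ => f p.1 p.2.1 p.2.2) (t, x, v) (0, 1, 0) :=
    funext fun v => ((line3_x hf1 t x v).const_mul (v ^ j)).deriv
  rw [heq] at h
  exact h

lemma Dcont (hf : ContDiff ℝ 2 (fun p : ℝ × ℝ × ℝ => f p.1 p.2.1 p.2.2))
    (e : ℝ × ℝ × ℝ) (t x : ℝ) :
    Continuous fun v =>
      fderiv ℝ (fun p : ℝ × ℝ × ℝ => f p.1 p.2.1 p.2.2) (t, x, v) e :=
  (ContinuousLinearMap.apply ℝ ℝ e).continuous.comp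
    ((hf.continuous_fderiv two_ne_zero).comp
      (continuous_const.prodMk (continuous_const.prodMk continuous_id)))

lemma parts_moment (hR : 0 < R)
    (hf : ContDiff ℝ 2 (fun p : ℝ × ℝ × ℝ => f p.1 p.2.1 p.2.2))
    (hsupp : ∀ t x v : ℝ, R < |v| → f t x v = 0) (j : ℕ) (t x : ℝ) :
    ∫ v, v ^ (j + 1) * fderiv ℝ (fun p : ℝ × ℝ × ℝ => f p.1 p.2.1 p.2.2) (t, x, v) (0, 0, 1)
      = -(((j : ℝ) + 1) * ∫ v, v ^ j * f t x v) := by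
  have hf1 : Differentiable ℝ (fun p : ℝ × ℝ × ℝ => f p.1 p.2.1 p.2.2) :=
    hf.differentiable two_ne_zero
  have h := integral_parts (R := R) hR (h := fun w => f t x w)
    (h' := fun v => fderiv ℝ (fun p : ℝ × ℝ × ℝ => f p.1 p.2.1 p.2.2) (t, x, v) (0, 0, 1))
    (φ := fun v => v ^ (j + 1)) (φ' := fun v => ((j : ℝ) + 1) * v ^ j)
    (fun v => line3_v hf1 t x v)
    (fun v => by simpa using hasDerivAt_pow (j + 1) v)
    (Dcont hf _ t x)
    (continuous_const.mul (continuous_pow j))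
    (fun v hv => hsupp t x v hv)
  rw [h]
  simp_rw [mul_assoc]
  rw [MeasureTheory.integral_const_mul]

lemma parts_moment0 (hR : 0 < R)
    (hf : ContDiff ℝ 2 (fun p : ℝ × ℝ × ℝ => f p.1 p.2.1 p.2.2))
    (hsupp : ∀ t x v : ℝ, R < |v| → f t x v = 0) (t x : ℝ) :
    ∫ v, fderiv ℝ (fun p : ℝ × ℝ × ℝ => f p.1 p.2.1 p.2.2) (t, x, v) (0, 0, 1) = 0 := by
  have hf1 : Differentiable ℝ (fun p : ℝ × ℝ × ℝ => f p.1 p.2.1 p.2.2) :=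
    hf.differentiable two_ne_zero
  have h := integral_parts (R := R) hR (h := fun w => f t x w)
    (h' := fun v => fderiv ℝ (fun p : ℝ × ℝ × ℝ => f p.1 p.2.1 p.2.2) (t, x, v) (0, 0, 1))
    (φ := fun _ => (1 : ℝ)) (φ' := fun _ => (0 : ℝ))
    (fun v => line3_v hf1 t x v)
    (fun v => hasDerivAt_const v 1)
    (Dcont hf _ t x)
    continuous_const
    (fun v hv => hsupp t x v hv)
  simpa using h

end moments

lemma split_lemma {R : ℝ} {f : ℝ → ℝ → ℝ → ℝ} {E : ℝ → ℝ → ℝ} (hR : 0 < R)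
    (hf : ContDiff ℝ 2 (fun p : ℝ × ℝ × ℝ => f p.1 p.2.1 p.2.2))
    (hsupp : ∀ t x v : ℝ, R < |v| → f t x v = 0)
    (hVlasov : ∀ t x v : ℝ,
      deriv (fun s => f s x v) t + v * deriv (fun y => f t y v) x +
        E t x * deriv (fun w => f t x w) v = 0) (j : ℕ) (t x : ℝ) :
    ∫ v, v ^ j * fderiv ℝ (fun p : ℝ × ℝ × ℝ => f p.1 p.2.1 p.2.2) (t, x, v) (1, 0, 0)
      = -(∫ v, v ^ (j + 1) * fderiv ℝ (fun p : ℝ × ℝ × ℝ => f p.1 p.2.1 p.2.2) (t, x, v) (0, 1, 0))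
        - E t x * ∫ v, v ^ j *
            fderiv ℝ (fun p : ℝ × ℝ × ℝ => f p.1 p.2.1 p.2.2) (t, x, v) (0, 0, 1) := by
  have hf1 : Differentiable ℝ (fun p : ℝ × ℝ × ℝ => f p.1 p.2.1 p.2.2) :=
    hf.differentiable two_ne_zero
  have hVl : ∀ v : ℝ,
      v ^ j * fderiv ℝ (fun p : ℝ × ℝ × ℝ => f p.1 p.2.1 p.2.2) (t, x, v) (1, 0, 0)
      = -(v ^ (j + 1) * fderiv ℝ (fun p : ℝ × ℝ × ℝ => f p.1 p.2.1 p.2.2) (t, x, v) (0, 1, 0))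
        - E t x * (v ^ j * fderiv ℝ (fun p : ℝ × ℝ × ℝ => f p.1 p.2.1 p.2.2) (t, x, v) (0, 0, 1)) := by
    intro v
    have h0 := hVlasov t x v
    rw [(line3_t hf1 t x v).deriv, (line3_x hf1 t x v).deriv, (line3_v hf1 t x v).deriv] at h0
    rw [pow_succ]
    linear_combination (v ^ j) * h0
  have intDx : Integrable (fun v : ℝ => v ^ (j + 1) *
      fderiv ℝ (fun p : ℝ × ℝ × ℝ => f p.1 p.2.1 p.2.2) (t, x, v) (0, 1, 0)) :=
    integrable_of_supported (R := R) ((continuous_pow _).mul (Dcont hf _ t x))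
      (fun v hv => by rw [fderiv3_zero hsupp hv]; simp)
  have intDv : Integrable (fun v : ℝ => v ^ j *
      fderiv ℝ (fun p : ℝ × ℝ × ℝ => f p.1 p.2.1 p.2.2) (t, x, v) (0, 0, 1)) :=
    integrable_of_supported (R := R) ((continuous_pow _).mul (Dcont hf _ t x))
      (fun v hv => by rw [fderiv3_zero hsupp hv]; simp)
  have intDxneg : Integrable (fun v : ℝ => -(v ^ (j + 1) *
      fderiv ℝ (fun p : ℝ × ℝ × ℝ => f p.1 p.2.1 p.2.2) (t, x, v) (0, 1, 0))) := intDx.neg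
  have intDvc : Integrable (fun v : ℝ => E t x * (v ^ j *
      fderiv ℝ (fun p : ℝ × ℝ × ℝ => f p.1 p.2.1 p.2.2) (t, x, v) (0, 0, 1))) :=
    intDv.const_mul (E t x)
  simp_rw [hVl]
  rw [integral_sub intDxneg intDvc, MeasureTheory.integral_neg, MeasureTheory.integral_const_mul]



/-- If `∂_t E = −m`, then the electric field is three times differentiable in time and
`∂_t³ E = 2 ∂_x(m E) − ∂_x² 𝔽 + E ∂_x m + ρ m`. -/
theorem vlasov_Efield_third_time_derivative (R : ℝ) (hR : 0 < R)
    (f : ℝ → ℝ → ℝ → ℝ) (E : ℝ → ℝ → ℝ)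
    (hf : ContDiff ℝ 2 (fun p : ℝ × ℝ × ℝ => f p.1 p.2.1 p.2.2))
    (hsupp : ∀ t x v : ℝ, R < |v| → f t x v = 0)
    (hE : ContDiff ℝ 1 (fun p : ℝ × ℝ => E p.1 p.2))
    (hVlasov : ∀ t x v : ℝ,
      deriv (fun s => f s x v) t + v * deriv (fun y => f t y v) x +
        E t x * deriv (fun w => f t x w) v = 0)
    (hEt : ∀ t x : ℝ, HasDerivAt (fun s => E s x) (-(∫ v : ℝ, v * f t x v)) t) :
    ∀ t x : ℝ,
      HasDerivAt (fun s => deriv (fun r => deriv (fun q => E q x) r) s)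
        (2 * deriv (fun y => (∫ v : ℝ, v * f t y v) * E t y) x
          - deriv (fun y => deriv (fun z => ∫ v : ℝ, v ^ 3 * f t z v) y) x
          + E t x * deriv (fun y => ∫ v : ℝ, v * f t y v) x
          + (∫ v : ℝ, f t x v) * (∫ v : ℝ, v * f t x v)) t := by
  intro t x
  have hf1 : Differentiable ℝ (fun p : ℝ × ℝ × ℝ => f p.1 p.2.1 p.2.2) :=
    hf.differentiable two_ne_zero
  have hE2d : Differentiable ℝ (fun p : ℝ × ℝ => E p.1 p.2) := hE.differentiable one_ne_zero
  -- continuity equation: ∂_t ρ = -∂_x m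
  have hρt : HasDerivAt (fun s => ∫ v, f s x v)
      (-(∫ v, v * fderiv ℝ (fun p : ℝ × ℝ × ℝ => f p.1 p.2.1 p.2.2) (t, x, v) (0, 1, 0))) t := by
    have h := moment_t hf hsupp 0 t x
    rw [split_lemma hR hf hsupp hVlasov 0 t x] at h
    simp only [zero_add, pow_zero, one_mul, pow_one] at h
    rw [parts_moment0 hR hf hsupp t x, mul_zero, sub_zero] at h
    exact h
  -- momentum equation : ∂_t m = -∂_x 𝔼 + E ρ
  have hmt : ∀ s y : ℝ, HasDerivAt (fun r => ∫ v, v * f r y v)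
      (-(∫ v, v ^ 2 * fderiv ℝ (fun p : ℝ × ℝ × ℝ => f p.1 p.2.1 p.2.2) (s, y, v) (0, 1, 0))
        + E s y * ∫ v, f s y v) s := by
    intro s y
    have h := moment_t hf hsupp 1 s y
    rw [split_lemma hR hf hsupp hVlasov 1 s y] at h
    rw [parts_moment hR hf hsupp 0 s y] at h
    simp only [one_add_one_eq_two, pow_zero, one_mul, pow_one, Nat.cast_zero, zero_add,
      mul_neg, mul_one, sub_neg_eq_add] at h ⊢
    exact h
  -- energy equation : ∂_t 𝔼 = -∂_x 𝔽 + 2 E m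
  have hQt : ∀ s y : ℝ, HasDerivAt (fun r => ∫ v, v ^ 2 * f r y v)
      (-(∫ v, v ^ 3 * fderiv ℝ (fun p : ℝ × ℝ × ℝ => f p.1 p.2.1 p.2.2) (s, y, v) (0, 1, 0))
        + 2 * (E s y * ∫ v, v * f s y v)) s := by
    intro s y
    have h := moment_t hf hsupp 2 s y
    rw [split_lemma hR hf hsupp hVlasov 2 s y] at h
    rw [parts_moment hR hf hsupp 1 s y] at h
    have harr : -(∫ v, (fun v : ℝ => v ^ (2 + 1) *
          fderiv ℝ (fun p : ℝ × ℝ × ℝ => f p.1 p.2.1 p.2.2) (s, y, v) (0, 1, 0)) v)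
        - E s y * -((((1 : ℕ) : ℝ) + 1) * ∫ v, v ^ 1 * f s y v)
        = -(∫ v, v ^ 3 * fderiv ℝ (fun p : ℝ × ℝ × ℝ => f p.1 p.2.1 p.2.2) (s, y, v) (0, 1, 0))
          + 2 * (E s y * ∫ v, v ^ 1 * f s y v) := by
      norm_num; ring
    rw [harr] at h
    simp only [pow_one] at h
    exact h
  -- C² regularity of the second and third moments
  have hcomp3 : ContDiff ℝ 2 (fun q : (ℝ × ℝ) × ℝ => f q.1.1 q.1.2 q.2) :=
    hf.comp ((contDiff_fst.comp contDiff_fst).prodMk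
      ((contDiff_snd.comp contDiff_fst).prodMk contDiff_snd))
  have hQ2 : ContDiff ℝ 2 (fun p : ℝ × ℝ => ∫ v, v ^ 2 * f p.1 p.2 v) :=
    contDiff_moment (R := R) (g := fun p v => v ^ 2 * f p.1 p.2 v)
      ((contDiff_snd.pow 2).mul hcomp3)
      (fun p v hv => by show v ^ 2 * f p.1 p.2 v = 0; rw [hsupp _ _ _ hv, mul_zero])
  have hF32 : ContDiff ℝ 2 (fun p : ℝ × ℝ => ∫ v, v ^ 3 * f p.1 p.2 v) :=
    contDiff_moment (R := R) (g := fun p v => v ^ 3 * f p.1 p.2 v)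
      ((contDiff_snd.pow 3).mul hcomp3)
      (fun p v hv => by show v ^ 3 * f p.1 p.2 v = 0; rw [hsupp _ _ _ hv, mul_zero])
  -- identification of partial derivatives of Q
  have hlinkQx : ∀ s y : ℝ, fderiv ℝ (fun p : ℝ × ℝ => ∫ v, v ^ 2 * f p.1 p.2 v) (s, y) (0, 1)
      = ∫ v, v ^ 2 * fderiv ℝ (fun p : ℝ × ℝ × ℝ => f p.1 p.2.1 p.2.2) (s, y, v) (0, 1, 0) :=
    fun s y => (pd_x (hQ2.differentiable two_ne_zero) s y).unique (moment_x hf hsupp 2 s y)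
  have hlinkQt : ∀ s y : ℝ, fderiv ℝ (fun p : ℝ × ℝ => ∫ v, v ^ 2 * f p.1 p.2 v) (s, y) (1, 0)
      = -(∫ v, v ^ 3 * fderiv ℝ (fun p : ℝ × ℝ × ℝ => f p.1 p.2.1 p.2.2) (s, y, v) (0, 1, 0))
        + 2 * (E s y * ∫ v, v * f s y v) :=
    fun s y => (pd_t (hQ2.differentiable two_ne_zero) s y).unique (hQt s y)
  have hlinkF3x : ∀ s y : ℝ, fderiv ℝ (fun p : ℝ × ℝ => ∫ v, v ^ 3 * f p.1 p.2 v) (s, y) (0, 1)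
      = ∫ v, v ^ 3 * fderiv ℝ (fun p : ℝ × ℝ × ℝ => f p.1 p.2.1 p.2.2) (s, y, v) (0, 1, 0) :=
    fun s y => (pd_x (hF32.differentiable two_ne_zero) s y).unique (moment_x hf hsupp 3 s y)
  -- the mixed second derivative of Q, t-derivative side
  have hQA := pd2_t hQ2 (0, 1) t x
  rw [show (fun s => fderiv ℝ (fun p : ℝ × ℝ => ∫ v, v ^ 2 * f p.1 p.2 v) (s, x) (0, 1))
      = fun s => ∫ v, v ^ 2 *
          fderiv ℝ (fun p : ℝ × ℝ × ℝ => f p.1 p.2.1 p.2.2) (s, x, v) (0, 1, 0)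
      from funext fun s => hlinkQx s x] at hQA
  rw [snd_deriv_symm hQ2 (t, x)] at hQA
  -- the mixed second derivative, x-derivative side
  have hQB := pd2_x hQ2 (1, 0) t x
  rw [show (fun y => fderiv ℝ (fun p : ℝ × ℝ => ∫ v, v ^ 2 * f p.1 p.2 v) (t, y) (1, 0))
      = fun y => -(∫ v, v ^ 3 *
            fderiv ℝ (fun p : ℝ × ℝ × ℝ => f p.1 p.2.1 p.2.2) (t, y, v) (0, 1, 0))
          + 2 * (E t y * ∫ v, v * f t y v)
      from funext fun y => hlinkQt t y] at hQB
  -- components of the x-derivative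
  have hF3xx := pd2_x hF32 (0, 1) t x
  rw [show (fun y => fderiv ℝ (fun p : ℝ × ℝ => ∫ v, v ^ 3 * f p.1 p.2 v) (t, y) (0, 1))
      = fun y => ∫ v, v ^ 3 *
          fderiv ℝ (fun p : ℝ × ℝ × ℝ => f p.1 p.2.1 p.2.2) (t, y, v) (0, 1, 0)
      from funext fun y => hlinkF3x t y] at hF3xx
  have hEx : HasDerivAt (fun y => E t y)
      (fderiv ℝ (fun p : ℝ × ℝ => E p.1 p.2) (t, x) (0, 1)) x := pd_x hE2d t x
  have hmx : HasDerivAt (fun y => ∫ v, v * f t y v)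
      (∫ v, v * fderiv ℝ (fun p : ℝ × ℝ × ℝ => f p.1 p.2.1 p.2.2) (t, x, v) (0, 1, 0)) x := by
    have h := moment_x hf hsupp 1 t x
    simp only [pow_one] at h
    exact h
  have hc := (hF3xx.neg).add ((hEx.mul hmx).const_mul (2 : ℝ))
  have hval := hQB.unique hc
  rw [hval] at hQA
  have hB := (hEt t x).mul hρt
  have hfinal := hQA.sub hB
  -- rewrite the goal
  have hstep1 : deriv (fun q => E q x) = fun r => -(∫ v, v * f r x v) :=
    funext fun r => (hEt r x).deriv
  have hstep2 : deriv (fun r => -(∫ v, v * f r x v))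
      = fun s => (∫ v, v ^ 2 *
          fderiv ℝ (fun p : ℝ × ℝ × ℝ => f p.1 p.2.1 p.2.2) (s, x, v) (0, 1, 0))
        - E s x * ∫ v, f s x v := by
    funext s
    rw [show deriv (fun r => -(∫ v, v * f r x v)) s = _ from ((hmt s x).neg).deriv]
    ring
  simp only [hstep1, hstep2]
  convert hfinal using 1
  case e'_4 => rfl
  case e'_5 => rfl
  case e'_8 => rfl
  -- identify the remaining deriv expressions in the goal value
  have d1 : deriv (fun y => (∫ v, v * f t y v) * E t y) x
      = (∫ v, v * fderiv ℝ (fun p : ℝ × ℝ × ℝ => f p.1 p.2.1 p.2.2) (t, x, v) (0, 1, 0)) * E t x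
        + (∫ v, v * f t x v) * fderiv ℝ (fun p : ℝ × ℝ => E p.1 p.2) (t, x) (0, 1) :=
    (hmx.mul hEx).deriv
  have hinner : deriv (fun z => ∫ v, v ^ 3 * f t z v)
      = fun y => ∫ v, v ^ 3 *
          fderiv ℝ (fun p : ℝ × ℝ × ℝ => f p.1 p.2.1 p.2.2) (t, y, v) (0, 1, 0) :=
    funext fun y => (moment_x hf hsupp 3 t y).deriv
  have d2 : deriv (fun y => ∫ v, v ^ 3 *
        fderiv ℝ (fun p : ℝ × ℝ × ℝ => f p.1 p.2.1 p.2.2) (t, y, v) (0, 1, 0)) x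
      = fderiv ℝ (fderiv ℝ (fun p : ℝ × ℝ => ∫ v, v ^ 3 * f p.1 p.2 v)) (t, x) (0, 1) (0, 1) :=
    hF3xx.deriv
  have d3 : deriv (fun y => ∫ v, v * f t y v) x
      = ∫ v, v * fderiv ℝ (fun p : ℝ × ℝ × ℝ => f p.1 p.2.1 p.2.2) (t, x, v) (0, 1, 0) :=
    hmx.deriv
  rw [d1, hinner, d2, d3]
  ring
end

section
/- Let L > 0 and R > 0. Let f : ℝ × ℝ × ℝ → ℝ be C¹, 2L-periodic in x, with support contained in {(t,x,v) : |v| ≤ R}; let E : ℝ × ℝ → ℝ be C², 2L-periodic in x; suppose ∂_t f + v ∂_x f + E(t,x) ∂_v f = 0 everywhere; suppose there is a constant ρ₀ such that ∂_x E(t,x) = ρ(t,x) − ρ₀ for all (t,x), where ρ(t,x) = ∫_ℝ f(t,x,v) dv; and suppose ∫_{−L}^{L} E(t,x) dx = 0 for all t. Then the total energy t ↦ (1/2) ∫_{−L}^{L} ∫_ℝ v² f(t,x,v) dv dx + (1/2) ∫_{−L}^{L} E(t,x)² dx is constant in time. -/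
open MeasureTheory intervalIntegral Set Metric

/-- Leibniz rule for interval integrals: everything continuous. -/
lemma leibniz_aux {F F' : ℝ → ℝ → ℝ} {a b : ℝ}
    (hFc : ∀ s, Continuous (F s))
    (hF' : Continuous fun p : ℝ × ℝ => F' p.1 p.2)
    (hd : ∀ s x, HasDerivAt (fun u => F u x) (F' s x) s) (t : ℝ) :
    HasDerivAt (fun s => ∫ x in a..b, F s x) (∫ x in a..b, F' t x) t := by
  obtain ⟨C, hC⟩ : ∃ C, ∀ p ∈ (Icc (t-1) (t+1)) ×ˢ (uIcc a b),
      ‖(fun p : ℝ × ℝ => F' p.1 p.2) p‖ ≤ C :=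
    (isCompact_Icc.prod isCompact_uIcc).exists_bound_of_continuousOn hF'.continuousOn
  have h := intervalIntegral.hasDerivAt_integral_of_dominated_loc_of_deriv_le
      (F := F) (F' := F') (x₀ := t) (a := a) (b := b) (bound := fun _ => C)
      (μ := volume) (ball_mem_nhds t one_pos)
      (Filter.Eventually.of_forall fun s => (hFc s).aestronglyMeasurable.restrict)
      ((hFc t).intervalIntegrable a b)
      ((hF'.comp (continuous_const.prodMk continuous_id)).aestronglyMeasurable.restrict)
      (Filter.Eventually.of_forall fun x hx s hs => by
        refine hC (s, x) ⟨?_, uIoc_subset_uIcc hx⟩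
        have := abs_lt.1 (by simpa [Real.dist_eq] using mem_ball.1 hs)
        exact ⟨by linarith [this.1], by linarith [this.2]⟩)
      (intervalIntegrable_const)
      (Filter.Eventually.of_forall fun x hx s hs => hd s x)
  exact h.2

/-- Fubini for continuous functions on a rectangle. -/
lemma swap_aux {g : ℝ → ℝ → ℝ} {a b c d : ℝ} (hab : a ≤ b) (hcd : c ≤ d)
    (hg : Continuous fun p : ℝ × ℝ => g p.1 p.2) :
    (∫ x in a..b, ∫ v in c..d, g x v) = ∫ v in c..d, ∫ x in a..b, g x v := by
  rw [intervalIntegral.integral_of_le hab, intervalIntegral.integral_of_le hcd]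
  simp_rw [intervalIntegral.integral_of_le hcd, intervalIntegral.integral_of_le hab]
  apply MeasureTheory.integral_integral_swap
  have h1 : IntegrableOn (fun p : ℝ × ℝ => g p.1 p.2) (Ioc a b ×ˢ Ioc c d) volume := by
    refine (hg.continuousOn.integrableOn_compact
      ((isCompact_Icc (a := a) (b := b)).prod (isCompact_Icc (a := c) (b := d)))).mono_set ?_
    exact Set.prod_mono Ioc_subset_Icc_self Ioc_subset_Icc_self
  rw [IntegrableOn, Measure.volume_eq_prod, ← MeasureTheory.Measure.prod_restrict] at h1
  exact h1

/-- Truncating an integral over ℝ to an interval containing the support. -/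
lemma restrict_aux {g : ℝ → ℝ} {R b : ℝ} (h0R : 0 ≤ R) (hRb : R < b)
    (h0 : ∀ v, R < |v| → g v = 0) : (∫ v : ℝ, g v) = ∫ v in (-b)..b, g v := by
  rw [intervalIntegral.integral_of_le (by linarith)]
  rw [MeasureTheory.setIntegral_eq_integral_of_forall_compl_eq_zero]
  intro v hv
  simp only [Set.mem_Ioc, not_and_or, not_lt, not_le] at hv
  rcases hv with h | h
  · exact h0 v (by rw [abs_of_nonpos (by linarith)]; linarith)
  · exact h0 v (by rw [abs_of_pos (by linarith)]; linarith)

/-- Key abstract energy conservation theorem: all partial derivatives are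
given as data with the needed properties. -/
theorem key (L R b ρ₀ : ℝ) (hL : 0 < L) (hR : 0 < R) (hRb : R < b)
    (f ft fx fv : ℝ → ℝ → ℝ → ℝ) (E Et : ℝ → ℝ → ℝ)
    (hfc : Continuous fun p : ℝ × ℝ × ℝ => f p.1 p.2.1 p.2.2)
    (hftc : Continuous fun p : ℝ × ℝ × ℝ => ft p.1 p.2.1 p.2.2)
    (hfxc : Continuous fun p : ℝ × ℝ × ℝ => fx p.1 p.2.1 p.2.2)
    (hfvc : Continuous fun p : ℝ × ℝ × ℝ => fv p.1 p.2.1 p.2.2)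
    (hdt : ∀ t x v, HasDerivAt (fun s => f s x v) (ft t x v) t)
    (hdx : ∀ t x v, HasDerivAt (fun y => f t y v) (fx t x v) x)
    (hdv : ∀ t x v, HasDerivAt (fun w => f t x w) (fv t x v) v)
    (hEc : Continuous fun p : ℝ × ℝ => E p.1 p.2)
    (hEtc : Continuous fun p : ℝ × ℝ => Et p.1 p.2)
    (hdEt : ∀ t x, HasDerivAt (fun s => E s x) (Et t x) t)
    (hdEtx : ∀ t x, HasDerivAt (fun y => Et t y) (∫ v in (-b)..b, ft t x v) x)
    (hfper : ∀ t x v : ℝ, f t (x + 2 * L) v = f t x v)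
    (hsupp : ∀ t x v : ℝ, R < |v| → f t x v = 0)
    (hVl : ∀ t x v, ft t x v = -(v * fx t x v) - E t x * fv t x v)
    (hmean : ∀ t : ℝ, (∫ x in (-L)..L, E t x) = 0) :
    ∀ t₁ t₂ : ℝ,
      (1 / 2) * (∫ x in (-L)..L, ∫ v in (-b)..b, v ^ 2 * f t₁ x v)
          + (1 / 2) * ∫ x in (-L)..L, (E t₁ x) ^ 2
        = (1 / 2) * (∫ x in (-L)..L, ∫ v in (-b)..b, v ^ 2 * f t₂ x v)
          + (1 / 2) * ∫ x in (-L)..L, (E t₂ x) ^ 2 := by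
  have hb0 : (0:ℝ) < b := lt_trans hR hRb
  -- current density and its x-derivative
  set j : ℝ → ℝ → ℝ := fun t x => ∫ v in (-b)..b, v * f t x v with hjdef
  set jx : ℝ → ℝ → ℝ := fun t x => ∫ v in (-b)..b, v * fx t x v with hjxdef
  -- section continuity helpers
  have hsec : ∀ (g : ℝ → ℝ → ℝ → ℝ), (Continuous fun p : ℝ × ℝ × ℝ => g p.1 p.2.1 p.2.2) →
      ∀ t x, Continuous fun v => g t x v := by
    intro g hg t x
    exact hg.comp (continuous_const.prodMk (continuous_const.prodMk continuous_id))
  -- boundary values of f vanish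
  have hfb : ∀ t x, f t x b = 0 := fun t x => hsupp t x b (by rw [abs_of_pos hb0]; exact hRb)
  have hfnb : ∀ t x, f t x (-b) = 0 := fun t x =>
    hsupp t x (-b) (by rw [abs_of_neg (by linarith)]; linarith)
  -- continuity equation: ∫ ft dv = - jx
  have hcont_eq : ∀ t x, (∫ v in (-b)..b, ft t x v) = - jx t x := by
    intro t x
    have h1 : (∫ v in (-b)..b, fv t x v) = f t x b - f t x (-b) :=
      intervalIntegral.integral_eq_sub_of_hasDerivAt (fun v _ => hdv t x v)
        ((hsec fv hfvc t x).intervalIntegrable _ _)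
    have h2 : (∫ v in (-b)..b, ft t x v)
        = ∫ v in (-b)..b, (-(v * fx t x v) - E t x * fv t x v) :=
      intervalIntegral.integral_congr (fun v _ => hVl t x v)
    rw [h2, intervalIntegral.integral_sub
        (show IntervalIntegrable (fun v => -(v * fx t x v)) volume (-b) b from
          ((continuous_id'.mul (hsec fx hfxc t x)).neg).intervalIntegrable _ _)
        (show IntervalIntegrable (fun v => E t x * fv t x v) volume (-b) b from
          (continuous_const.mul (hsec fv hfvc t x)).intervalIntegrable _ _),
      intervalIntegral.integral_neg, intervalIntegral.integral_const_mul, h1, hfb, hfnb]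
    simp [hjxdef]
  -- x-derivative of j
  have hdj : ∀ t x, HasDerivAt (fun y => j t y) (jx t x) x := by
    intro t x
    exact leibniz_aux (F := fun y v => v * f t y v) (F' := fun y v => v * fx t y v)
      (fun y => continuous_id.mul (hsec f hfc t y))
      (continuous_snd.mul (hfxc.comp
        (continuous_const.prodMk (continuous_fst.prodMk continuous_snd))))
      (fun y v => (hdx t y v).const_mul v) x
  -- Et + j is constant in x
  have hEtj : ∀ t x, Et t x = (Et t (-L) + j t (-L)) - j t x := by
    intro t x
    have key : ∀ y, HasDerivAt (fun z => Et t z + j t z) 0 y := by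
      intro y
      have h6 : HasDerivAt (fun z => Et t z) (- jx t y) y := by
        have h := hdEtx t y; rwa [hcont_eq t y] at h
      have h7 := h6.add (hdj t y)
      simp only [neg_add_cancel] at h7; exact h7
    have h := is_const_of_deriv_eq_zero (f := fun z => Et t z + j t z)
      (fun y => (key y).differentiableAt) (fun y => (key y).deriv) x (-L)
    linarith [h]
  -- derivative of potential energy integrand integral
  have hjc : ∀ t, Continuous fun x => j t x := by
    intro t
    exact intervalIntegral.continuous_parametric_intervalIntegral_of_continuous'
      (f := fun x v => v * f t x v)
      (continuous_snd.mul (hfc.comp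
        (continuous_const.prodMk (continuous_fst.prodMk continuous_snd)))) _ _
  have hPE : ∀ t, HasDerivAt (fun s => ∫ x in (-L)..L, (E s x)^2)
      (-(2 * ∫ x in (-L)..L, E t x * j t x)) t := by
    intro t
    have h := leibniz_aux (a := -L) (b := L) (F := fun s x => (E s x)^2) (F' := fun s x => 2 * E s x * Et s x)
      (fun s => (hEc.comp (continuous_const.prodMk continuous_id)).pow 2)
      ((continuous_const.mul hEc).mul hEtc)
      (fun s x => by have h := (hdEt s x).pow 2; simp at h; exact h) t
    have heq : (∫ x in (-L)..L, 2 * E t x * Et t x)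
        = -(2 * ∫ x in (-L)..L, E t x * j t x) := by
      have hpt : ∀ x, 2 * E t x * Et t x
          = 2 * (Et t (-L) + j t (-L)) * E t x - 2 * (E t x * j t x) := by
        intro x; rw [hEtj t x]; ring
      rw [intervalIntegral.integral_congr (fun x _ => hpt x),
        intervalIntegral.integral_sub
          (show IntervalIntegrable (fun x => 2 * (Et t (-L) + j t (-L)) * E t x) volume (-L) L from
            (continuous_const.mul (hEc.comp (continuous_const.prodMk continuous_id))).intervalIntegrable _ _)
          (show IntervalIntegrable (fun x => 2 * (E t x * j t x)) volume (-L) L from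
            (continuous_const.mul ((hEc.comp (continuous_const.prodMk continuous_id)).mul
              (hjc t))).intervalIntegrable _ _),
        intervalIntegral.integral_const_mul, intervalIntegral.integral_const_mul,
        hmean t]
      ring
    rwa [heq] at h
  -- derivative of kinetic energy
  have hKE : ∀ t, HasDerivAt (fun s => ∫ x in (-L)..L, ∫ v in (-b)..b, v ^ 2 * f s x v)
      (2 * ∫ x in (-L)..L, E t x * j t x) t := by
    intro t
    have hinner : ∀ (s x : ℝ), HasDerivAt (fun u => ∫ v in (-b)..b, v ^ 2 * f u x v)
        (∫ v in (-b)..b, v ^ 2 * ft s x v) s := by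
      intro s x
      exact leibniz_aux (F := fun u v => v ^ 2 * f u x v) (F' := fun u v => v ^ 2 * ft u x v)
        (fun u => (continuous_pow 2).mul (hsec f hfc u x))
        ((continuous_snd.pow 2).mul (hftc.comp
          (continuous_fst.prodMk (continuous_const.prodMk continuous_snd))))
        (fun u v => (hdt u x v).const_mul (v ^ 2)) s
    have h := leibniz_aux (a := -L) (b := L) (F := fun s x => ∫ v in (-b)..b, v ^ 2 * f s x v)
      (F' := fun s x => ∫ v in (-b)..b, v ^ 2 * ft s x v)
      (fun s => intervalIntegral.continuous_parametric_intervalIntegral_of_continuous'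
        (f := fun x v => v ^ 2 * f s x v)
        (by exact (continuous_snd.pow 2).mul (hfc.comp
          (continuous_const.prodMk (continuous_fst.prodMk continuous_snd)))) _ _)
      (intervalIntegral.continuous_parametric_intervalIntegral_of_continuous'
        (f := fun (p : ℝ × ℝ) v => v ^ 2 * ft p.1 p.2 v)
        (by exact (continuous_snd.pow 2).mul (hftc.comp
          ((continuous_fst.comp continuous_fst).prodMk
            ((continuous_snd.comp continuous_fst).prodMk continuous_snd)))) _ _)
      (fun s x => hinner s x) t
    have hIBP : ∀ x, (∫ v in (-b)..b, v ^ 2 * fv t x v) = -(2 * j t x) := by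
      intro x
      have hibp := intervalIntegral.integral_mul_deriv_eq_deriv_mul
        (a := -b) (b := b) (u := fun v => v ^ 2) (u' := fun v => 2 * v) (v := fun v => f t x v)
        (v' := fun v => fv t x v)
        (fun y _ => by simpa using hasDerivAt_pow 2 y)
        (fun y _ => hdv t x y)
        ((continuous_const.mul continuous_id).intervalIntegrable _ _)
        ((hsec fv hfvc t x).intervalIntegrable _ _)
      beta_reduce at hibp
      rw [hfb, hfnb] at hibp
      have h2j : (∫ y in (-b)..b, 2 * y * f t x y) = 2 * j t x := by
        simp_rw [mul_assoc]
        exact intervalIntegral.integral_const_mul 2 _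
      rw [hibp, h2j]; ring
    have hsplit : ∀ x, (∫ v in (-b)..b, v ^ 2 * ft t x v)
        = -(∫ v in (-b)..b, v ^ 3 * fx t x v) + 2 * (E t x * j t x) := by
      intro x
      have h2 : (∫ v in (-b)..b, v ^ 2 * ft t x v)
          = ∫ v in (-b)..b, (-(v ^ 3 * fx t x v) - E t x * (v ^ 2 * fv t x v)) :=
        intervalIntegral.integral_congr (fun v _ => by rw [hVl t x v]; ring)
      rw [h2, intervalIntegral.integral_sub
          (show IntervalIntegrable (fun v => -(v ^ 3 * fx t x v)) volume (-b) b from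
            (((continuous_pow 3).mul (hsec fx hfxc t x)).neg).intervalIntegrable _ _)
          (show IntervalIntegrable (fun v => E t x * (v ^ 2 * fv t x v)) volume (-b) b from
            (continuous_const.mul ((continuous_pow 2).mul (hsec fv hfvc t x))).intervalIntegrable _ _),
        intervalIntegral.integral_neg, intervalIntegral.integral_const_mul, hIBP x]
      ring
    have hzero : (∫ x in (-L)..L, ∫ v in (-b)..b, v ^ 3 * fx t x v) = 0 := by
      rw [swap_aux (by linarith) (by linarith)
        ((continuous_snd.pow 3).mul (hfxc.comp
          (continuous_const.prodMk (continuous_fst.prodMk continuous_snd))))]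
      have hv0 : ∀ v, (∫ x in (-L)..L, v ^ 3 * fx t x v) = 0 := by
        intro v
        rw [intervalIntegral.integral_const_mul]
        have hFTC : (∫ x in (-L)..L, fx t x v) = f t L v - f t (-L) v :=
          intervalIntegral.integral_eq_sub_of_hasDerivAt (fun y _ => hdx t y v)
            ((hfxc.comp (continuous_const.prodMk
              (continuous_id.prodMk continuous_const))).intervalIntegrable _ _)
        have hper : f t L v = f t (-L) v := by
          have hp := hfper t (-L) v
          rw [show -L + 2 * L = L by ring] at hp
          exact hp
        rw [hFTC, hper, sub_self, mul_zero]
      rw [intervalIntegral.integral_congr (fun v _ => hv0 v)]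
      simp
    have heval : (∫ x in (-L)..L, ∫ v in (-b)..b, v ^ 2 * ft t x v)
        = 2 * ∫ x in (-L)..L, E t x * j t x := by
      rw [intervalIntegral.integral_congr (fun x _ => hsplit x),
        intervalIntegral.integral_add
          (show IntervalIntegrable (fun x => -(∫ v in (-b)..b, v ^ 3 * fx t x v)) volume (-L) L from
            ((intervalIntegral.continuous_parametric_intervalIntegral_of_continuous'
              (f := fun x v => v ^ 3 * fx t x v)
              (by exact (continuous_snd.pow 3).mul (hfxc.comp
                (continuous_const.prodMk (continuous_fst.prodMk continuous_snd)))) (-b) b).neg).intervalIntegrable _ _)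
          (show IntervalIntegrable (fun x => 2 * (E t x * j t x)) volume (-L) L from
            (continuous_const.mul ((hEc.comp (continuous_const.prodMk continuous_id)).mul
              (hjc t))).intervalIntegrable _ _),
        intervalIntegral.integral_neg, intervalIntegral.integral_const_mul, hzero]
      ring
    rwa [heval] at h
  -- conclude
  intro t₁ t₂
  have hT : ∀ t, HasDerivAt (fun s =>
      (1 / 2) * (∫ x in (-L)..L, ∫ v in (-b)..b, v ^ 2 * f s x v)
        + (1 / 2) * ∫ x in (-L)..L, (E s x) ^ 2) 0 t := by
    intro t
    have h := ((hKE t).const_mul (1/2 : ℝ)).add ((hPE t).const_mul (1/2 : ℝ))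
    have : (1/2 : ℝ) * (2 * ∫ x in (-L)..L, E t x * j t x)
        + (1/2 : ℝ) * (-(2 * ∫ x in (-L)..L, E t x * j t x)) = 0 := by ring
    rwa [this] at h
  exact is_const_of_deriv_eq_zero (fun t => (hT t).differentiableAt)
    (fun t => (hT t).deriv) t₁ t₂

/-- Conservation of total energy for the periodic 1+1 Vlasov–Poisson system. -/
theorem vlasov_poisson_energy_conservation (L R ρ₀ : ℝ) (hL : 0 < L) (hR : 0 < R)
    (f : ℝ → ℝ → ℝ → ℝ) (E : ℝ → ℝ → ℝ)
    (hf : ContDiff ℝ 1 (fun p : ℝ × ℝ × ℝ => f p.1 p.2.1 p.2.2))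
    (hfper : ∀ t x v : ℝ, f t (x + 2 * L) v = f t x v)
    (hsupp : ∀ t x v : ℝ, R < |v| → f t x v = 0)
    (hE : ContDiff ℝ 2 (fun p : ℝ × ℝ => E p.1 p.2))
    (hEper : ∀ t x : ℝ, E t (x + 2 * L) = E t x)
    (hVlasov : ∀ t x v : ℝ,
      deriv (fun s => f s x v) t + v * deriv (fun y => f t y v) x +
        E t x * deriv (fun w => f t x w) v = 0)
    (hPoisson : ∀ t x : ℝ, HasDerivAt (fun y => E t y) ((∫ v : ℝ, f t x v) - ρ₀) x)
    (hmean : ∀ t : ℝ, (∫ x in (-L)..L, E t x) = 0) :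
    ∀ t₁ t₂ : ℝ,
      (1 / 2) * (∫ x in (-L)..L, ∫ v : ℝ, v ^ 2 * f t₁ x v)
          + (1 / 2) * ∫ x in (-L)..L, (E t₁ x) ^ 2
        = (1 / 2) * (∫ x in (-L)..L, ∫ v : ℝ, v ^ 2 * f t₂ x v)
          + (1 / 2) * ∫ x in (-L)..L, (E t₂ x) ^ 2 := by
  intro t₁ t₂
  have hRb : R < R + 1 := by linarith
  have hK : ∀ t x, (∫ v : ℝ, v ^ 2 * f t x v) = ∫ v in (-(R+1))..(R+1), v ^ 2 * f t x v :=
    fun t x => restrict_aux hR.le hRb (fun v hv => by rw [hsupp t x v hv, mul_zero])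
  simp only [hK]
  -- basic differentiability data for f
  have hFd : Differentiable ℝ (fun p : ℝ × ℝ × ℝ => f p.1 p.2.1 p.2.2) :=
    hf.differentiable one_ne_zero
  have hdt' : ∀ t x v : ℝ, HasDerivAt (fun s => f s x v)
      (fderiv ℝ (fun p : ℝ × ℝ × ℝ => f p.1 p.2.1 p.2.2) (t, x, v) (1, 0, 0)) t := by
    intro t x v
    exact (hFd (t, x, v)).hasFDerivAt.comp_hasDerivAt t
      (HasDerivAt.prodMk (hasDerivAt_id t) (hasDerivAt_const t ((x, v) : ℝ × ℝ)))
  have hdx' : ∀ t x v : ℝ, HasDerivAt (fun y => f t y v)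
      (fderiv ℝ (fun p : ℝ × ℝ × ℝ => f p.1 p.2.1 p.2.2) (t, x, v) (0, 1, 0)) x := by
    intro t x v
    exact (hFd (t, x, v)).hasFDerivAt.comp_hasDerivAt x
      (HasDerivAt.prodMk (hasDerivAt_const x t) (HasDerivAt.prodMk (hasDerivAt_id x) (hasDerivAt_const x v)))
  have hdv' : ∀ t x v : ℝ, HasDerivAt (fun w => f t x w)
      (fderiv ℝ (fun p : ℝ × ℝ × ℝ => f p.1 p.2.1 p.2.2) (t, x, v) (0, 0, 1)) v := by
    intro t x v
    exact (hFd (t, x, v)).hasFDerivAt.comp_hasDerivAt v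
      (HasDerivAt.prodMk (hasDerivAt_const v t) (HasDerivAt.prodMk (hasDerivAt_const v x) (hasDerivAt_id v)))
  -- data for E
  have hGd : Differentiable ℝ (fun p : ℝ × ℝ => E p.1 p.2) := hE.differentiable (by norm_num)
  have hDG : Differentiable ℝ (fderiv ℝ (fun p : ℝ × ℝ => E p.1 p.2)) :=
    (hE.fderiv_right (m := 1) (by norm_num)).differentiable one_ne_zero
  have hdEt' : ∀ t x : ℝ, HasDerivAt (fun s => E s x)
      (fderiv ℝ (fun p : ℝ × ℝ => E p.1 p.2) (t, x) (1, 0)) t := by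
    intro t x
    exact (hGd (t, x)).hasFDerivAt.comp_hasDerivAt t
      (HasDerivAt.prodMk (hasDerivAt_id t) (hasDerivAt_const t x))
  refine key L R (R + 1) ρ₀ hL hR hRb f
    (fun t x v => fderiv ℝ (fun p : ℝ × ℝ × ℝ => f p.1 p.2.1 p.2.2) (t, x, v) (1, 0, 0))
    (fun t x v => fderiv ℝ (fun p : ℝ × ℝ × ℝ => f p.1 p.2.1 p.2.2) (t, x, v) (0, 1, 0))
    (fun t x v => fderiv ℝ (fun p : ℝ × ℝ × ℝ => f p.1 p.2.1 p.2.2) (t, x, v) (0, 0, 1))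
    E (fun t x => fderiv ℝ (fun p : ℝ × ℝ => E p.1 p.2) (t, x) (1, 0))
    hf.continuous
    ((hf.continuous_fderiv one_ne_zero).clm_apply continuous_const)
    ((hf.continuous_fderiv one_ne_zero).clm_apply continuous_const)
    ((hf.continuous_fderiv one_ne_zero).clm_apply continuous_const)
    hdt' hdx' hdv'
    hE.continuous
    ((hE.continuous_fderiv (by norm_num)).clm_apply continuous_const)
    hdEt'
    ?_ hfper hsupp ?_ hmean t₁ t₂
  · -- hdEtx : x-derivative of Et equals ∫ ft dv
    intro t x
    have hcurve : HasDerivAt (fun y : ℝ => ((t, y) : ℝ × ℝ)) (0, 1) x :=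
      HasDerivAt.prodMk (hasDerivAt_const x t) (hasDerivAt_id x)
    have h1 : HasDerivAt (fun y => fderiv ℝ (fun p : ℝ × ℝ => E p.1 p.2) (t, y))
        (fderiv ℝ (fderiv ℝ (fun p : ℝ × ℝ => E p.1 p.2)) (t, x) (0, 1)) x :=
      (hDG (t, x)).hasFDerivAt.comp_hasDerivAt x hcurve
    have h2 := h1.clm_apply (hasDerivAt_const x ((1, 0) : ℝ × ℝ))
    have hsymm : fderiv ℝ (fderiv ℝ (fun p : ℝ × ℝ => E p.1 p.2)) (t, x) (0, 1) (1, 0)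
        = fderiv ℝ (fderiv ℝ (fun p : ℝ × ℝ => E p.1 p.2)) (t, x) (1, 0) (0, 1) :=
      second_derivative_symmetric (fun q => (hGd q).hasFDerivAt)
        ((hDG (t, x)).hasFDerivAt) _ _
    have hcurve2 : HasDerivAt (fun s : ℝ => ((s, x) : ℝ × ℝ)) (1, 0) t :=
      HasDerivAt.prodMk (hasDerivAt_id t) (hasDerivAt_const t x)
    have h3 : HasDerivAt (fun s => fderiv ℝ (fun p : ℝ × ℝ => E p.1 p.2) (s, x))
        (fderiv ℝ (fderiv ℝ (fun p : ℝ × ℝ => E p.1 p.2)) (t, x) (1, 0)) t :=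
      (hDG (t, x)).hasFDerivAt.comp_hasDerivAt t hcurve2
    have h4 := h3.clm_apply (hasDerivAt_const t ((0, 1) : ℝ × ℝ))
    have hEx : ∀ s y : ℝ, fderiv ℝ (fun p : ℝ × ℝ => E p.1 p.2) (s, y) (0, 1)
        = (∫ v : ℝ, f s y v) - ρ₀ := by
      intro s y
      have hd : HasDerivAt (fun z => E s z)
          (fderiv ℝ (fun p : ℝ × ℝ => E p.1 p.2) (s, y) (0, 1)) y :=
        (hGd (s, y)).hasFDerivAt.comp_hasDerivAt y
          (HasDerivAt.prodMk (hasDerivAt_const y s) (hasDerivAt_id y))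
      exact hd.unique (hPoisson s y)
    have hρ : ∀ s y : ℝ, (∫ v : ℝ, f s y v) = ∫ v in (-(R+1))..(R+1), f s y v :=
      fun s y => restrict_aux hR.le hRb (fun v hv => hsupp s y v hv)
    have h5 : HasDerivAt (fun s => (∫ v in (-(R+1))..(R+1), f s x v) - ρ₀)
        (fderiv ℝ (fderiv ℝ (fun p : ℝ × ℝ => E p.1 p.2)) (t, x) (1, 0) (0, 1)) t := by
      have heqf : (fun s => fderiv ℝ (fun p : ℝ × ℝ => E p.1 p.2) (s, x) (0, 1))
          = fun s => (∫ v in (-(R+1))..(R+1), f s x v) - ρ₀ := by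
        funext s; rw [hEx s x, hρ s x]
      rw [← heqf]
      simpa using h4
    have h6 : HasDerivAt (fun s => (∫ v in (-(R+1))..(R+1), f s x v) - ρ₀)
        (∫ v in (-(R+1))..(R+1),
          fderiv ℝ (fun p : ℝ × ℝ × ℝ => f p.1 p.2.1 p.2.2) (t, x, v) (1, 0, 0)) t := by
      apply HasDerivAt.sub_const
      exact leibniz_aux (F := fun s v => f s x v)
        (F' := fun s v =>
          fderiv ℝ (fun p : ℝ × ℝ × ℝ => f p.1 p.2.1 p.2.2) (s, x, v) (1, 0, 0))
        (fun s => hf.continuous.comp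
          (continuous_const.prodMk (continuous_const.prodMk continuous_id)))
        (((hf.continuous_fderiv one_ne_zero).clm_apply continuous_const).comp
          (continuous_fst.prodMk (continuous_const.prodMk continuous_snd)))
        (fun s v => hdt' s x v) t
    have h7 := h5.unique h6
    have h8 : HasDerivAt
        (fun y => fderiv ℝ (fun p : ℝ × ℝ => E p.1 p.2) (t, y) (1, 0))
        (fderiv ℝ (fderiv ℝ (fun p : ℝ × ℝ => E p.1 p.2)) (t, x) (0, 1) (1, 0)) x := by
      simpa using h2
    rw [hsymm, h7] at h8
    exact h8
  · -- Vlasov in the partial-derivative form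
    intro t x v
    have h := hVlasov t x v
    rw [(hdt' t x v).deriv, (hdx' t x v).deriv, (hdv' t x v).deriv] at h
    linarith
end
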